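/- arXiv:1810.02638 — 14 statements merged into one kernel-verified Lean document; each statement's English description precedes it below -/
import Mathlib

section
/- Let Q be a real symmetric n×n matrix whose kernel is exactly the span of the all-ones vector 𝟙. Let L and L' be any two generalized inverses of Q (i.e. Q·L·Q = Q and Q·L'·Q = Q). Then for all balanced vectors ν₁, ν₂ ∈ ℝⁿ one has ν₁ᵀ·L·ν₂ = ν₁ᵀ·L'·ν₂; moreover this common value is symmetric in ν₁ and ν₂, i.e. ν₁ᵀ·L·ν₂ = ν₂ᵀ·L·ν₁. (Paper: Lemma 5.1, independence of the energy pairing from the generalized inverse.) -/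
open Matrix

private lemma sandwich_dot {n : ℕ} (Q M : Matrix (Fin n) (Fin n) ℝ) (hQ : Qᵀ = Q)
    (x y : Fin n → ℝ) :
    (Q.mulVec x) ⬝ᵥ M.mulVec (Q.mulVec y) = x ⬝ᵥ ((Q * M * Q).mulVec y) := by
  simp [Matrix.dotProduct_mulVec, Matrix.vecMul_mulVec, hQ, Matrix.vecMul_vecMul,
    Matrix.mul_assoc]

private lemma balanced_mem_range {n : ℕ} (Q : Matrix (Fin n) (Fin n) ℝ)
    (hQsymm : Q.IsSymm)
    (hker : ∀ v : Fin n → ℝ, Q.mulVec v = 0 ↔ ∃ c : ℝ, v = fun _ => c)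
    (ν : Fin n → ℝ) (h₁ : ∑ i, ν i = 0) : ∃ x, Q.mulVec x = ν := by
  rcases Nat.eq_zero_or_pos n with hn | hn
  · exact ⟨0, by subst hn; ext i; exact absurd i.2 (by omega)⟩
  have hQ1 : Q.mulVec (fun _ => (1:ℝ)) = 0 := (hker _).mpr ⟨1, rfl⟩
  let f : (Fin n → ℝ) →ₗ[ℝ] ℝ :=
    { toFun := fun v => ∑ i, v i
      map_add' := fun a b => by simp [Finset.sum_add_distrib]
      map_smul' := fun c a => by simp [Finset.mul_sum] }
  have hfsurj : Function.Surjective f := by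
    intro r
    refine ⟨fun _ => r / n, ?_⟩
    simp [f]
    field_simp
  have hker_eq : LinearMap.ker Q.mulVecLin = Submodule.span ℝ {(fun _ => (1:ℝ))} := by
    ext v
    simp only [LinearMap.mem_ker, Matrix.mulVecLin_apply, hker, Submodule.mem_span_singleton]
    constructor
    · rintro ⟨c, rfl⟩; exact ⟨c, by ext i; simp⟩
    · rintro ⟨c, rfl⟩; exact ⟨c, by ext i; simp⟩
  have h1ne : (fun _ => (1:ℝ)) ≠ (0 : Fin n → ℝ) := by
    intro h
    have := congrFun h ⟨0, hn⟩
    simp at this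
  have hrank : Module.finrank ℝ (LinearMap.range Q.mulVecLin) = n - 1 := by
    have h1 := LinearMap.finrank_range_add_finrank_ker Q.mulVecLin
    rw [hker_eq, finrank_span_singleton h1ne] at h1
    simp [Module.finrank_pi] at h1
    omega
  have hrankf : Module.finrank ℝ (LinearMap.ker f) = n - 1 := by
    have h1 := LinearMap.finrank_range_add_finrank_ker f
    rw [LinearMap.range_eq_top.mpr hfsurj] at h1
    simp [Module.finrank_pi] at h1
    omega
  have hle : LinearMap.range Q.mulVecLin ≤ LinearMap.ker f := by
    rintro _ ⟨x, rfl⟩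
    simp only [LinearMap.mem_ker, Matrix.mulVecLin_apply]
    have : f (Q.mulVec x) = (Q.mulVec x) ⬝ᵥ (fun _ => (1:ℝ)) := by
      simp [f, dotProduct]
    rw [this, dotProduct_comm, Matrix.dotProduct_mulVec, ← Matrix.mulVec_transpose,
      hQsymm.eq, hQ1, zero_dotProduct]
  have heq : LinearMap.range Q.mulVecLin = LinearMap.ker f :=
    Submodule.eq_of_le_of_finrank_le hle (by rw [hrank, hrankf])
  have : ν ∈ LinearMap.range Q.mulVecLin := heq ▸ (by exact h₁ : f ν = 0)
  exact this

/-- **Lemma 5.1 (independence).** If `Q` is a real symmetric `n × n` matrix whose kernel is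
exactly the span of the all-ones vector, and `L`, `L'` are generalized inverses of `Q`
(`Q * L * Q = Q` and `Q * L' * Q = Q`), then for all balanced vectors `ν₁, ν₂` one has
`ν₁ᵀ L ν₂ = ν₁ᵀ L' ν₂`, and this common value is symmetric in `ν₁, ν₂`. -/
theorem energy_pairing_independent_of_generalized_inverse
    {n : ℕ} (Q L L' : Matrix (Fin n) (Fin n) ℝ)
    (hQsymm : Q.IsSymm)
    (hker : ∀ v : Fin n → ℝ, Q.mulVec v = 0 ↔ ∃ c : ℝ, v = fun _ => c)
    (hL : Q * L * Q = Q) (hL' : Q * L' * Q = Q)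
    (ν₁ ν₂ : Fin n → ℝ) (h₁ : ∑ i, ν₁ i = 0) (h₂ : ∑ i, ν₂ i = 0) :
    ν₁ ⬝ᵥ L.mulVec ν₂ = ν₁ ⬝ᵥ L'.mulVec ν₂ ∧
    ν₁ ⬝ᵥ L.mulVec ν₂ = ν₂ ⬝ᵥ L.mulVec ν₁ := by
  obtain ⟨x₁, rfl⟩ := balanced_mem_range Q hQsymm hker ν₁ h₁
  obtain ⟨x₂, rfl⟩ := balanced_mem_range Q hQsymm hker ν₂ h₂
  rw [sandwich_dot Q L hQsymm.eq, sandwich_dot Q L' hQsymm.eq, sandwich_dot Q L hQsymm.eq,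
    hL, hL']
  refine ⟨rfl, ?_⟩
  rw [Matrix.dotProduct_mulVec, ← Matrix.mulVec_transpose, hQsymm.eq, dotProduct_comm]
end

section
/- Let B be an n×m real matrix and D an m×m diagonal matrix with positive diagonal entries, and set Q = B·D⁻¹·Bᵀ. Assume the kernel of Bᵀ (equivalently, of Q) is exactly the span of the all-ones vector 𝟙 ∈ ℝⁿ. Let L be any generalized inverse of Q. Then for every nonzero balanced vector ν ∈ ℝⁿ one has νᵀ·L·ν > 0; that is, the energy pairing (ν₁, ν₂) ↦ ν₁ᵀ·L·ν₂ is positive definite on the space of balanced vectors. (Paper: Lemma 5.1, positive definiteness of the energy pairing.) -/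
open Matrix

/-- **Lemma 5.1 (positive definiteness).** Let `Q = B D⁻¹ Bᵀ` with `D` a positive diagonal
matrix, and suppose the kernel of `Bᵀ` is exactly the span of the all-ones vector. Then for
any generalized inverse `L` of `Q` and any nonzero balanced vector `ν`, `νᵀ L ν > 0`. -/
theorem energy_pairing_positive_definite
    {n m : ℕ} (B : Matrix (Fin n) (Fin m) ℝ) (d : Fin m → ℝ)
    (hd : ∀ i, 0 < d i)
    (hker : ∀ v : Fin n → ℝ, Bᵀ.mulVec v = 0 ↔ ∃ c : ℝ, v = fun _ => c)
    (L : Matrix (Fin n) (Fin n) ℝ)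
    (hL : (B * (Matrix.diagonal d)⁻¹ * Bᵀ) * L * (B * (Matrix.diagonal d)⁻¹ * Bᵀ)
        = B * (Matrix.diagonal d)⁻¹ * Bᵀ)
    (ν : Fin n → ℝ) (hν : ν ≠ 0) (hbal : ∑ i, ν i = 0) :
    0 < ν ⬝ᵥ L.mulVec ν := by
  -- n ≥ 1
  rcases Nat.eq_zero_or_pos n with hn | hn
  · subst hn
    exact absurd (funext fun i => i.elim0) hν
  set D : Matrix (Fin m) (Fin m) ℝ := Matrix.diagonal d with hD
  have hdinv : D⁻¹ = Matrix.diagonal (fun i => (d i)⁻¹) := by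
    apply Matrix.inv_eq_right_inv
    rw [hD, Matrix.diagonal_mul_diagonal]
    rw [show (fun i => d i * (d i)⁻¹) = fun _ => (1:ℝ) from
      funext fun i => mul_inv_cancel₀ (hd i).ne', Matrix.diagonal_one]
  set Q : Matrix (Fin n) (Fin n) ℝ := B * D⁻¹ * Bᵀ with hQ
  have hQsymm : Qᵀ = Q := by
    rw [hQ, Matrix.transpose_mul, Matrix.transpose_mul, Matrix.transpose_transpose,
      hdinv, Matrix.diagonal_transpose, Matrix.mul_assoc]
  -- quadratic form computation
  have hquad : ∀ w : Fin n → ℝ, w ⬝ᵥ Q.mulVec w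
      = ∑ i, (d i)⁻¹ * (Bᵀ.mulVec w i)^2 := by
    intro w
    have : Q.mulVec w = B.mulVec (fun i => (d i)⁻¹ * Bᵀ.mulVec w i) := by
      rw [hQ, ← Matrix.mulVec_mulVec, ← Matrix.mulVec_mulVec, hdinv]
      have : (Matrix.diagonal fun i => (d i)⁻¹) *ᵥ (Bᵀ *ᵥ w)
          = fun i => (d i)⁻¹ * (Bᵀ *ᵥ w) i :=
        funext fun i => Matrix.mulVec_diagonal _ _ _
      rw [this]
    rw [this, Matrix.dotProduct_mulVec, ← Matrix.mulVec_transpose]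
    simp [dotProduct, mul_comm, sq, mul_assoc, mul_left_comm]
  -- Q.mulVec w = 0 ↔ Bᵀ w = 0
  have hQker : ∀ w : Fin n → ℝ, Q.mulVec w = 0 ↔ Bᵀ.mulVec w = 0 := by
    intro w
    constructor
    · intro h
      have h0 : ∑ i, (d i)⁻¹ * (Bᵀ.mulVec w i)^2 = 0 := by
        rw [← hquad]; rw [h]; simp
      have hterm : ∀ i ∈ Finset.univ, (0:ℝ) ≤ (d i)⁻¹ * (Bᵀ.mulVec w i)^2 :=
        fun i _ => mul_nonneg (inv_nonneg.2 (hd i).le) (sq_nonneg _)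
      funext i
      have := (Finset.sum_eq_zero_iff_of_nonneg hterm).1 h0 i (Finset.mem_univ i)
      have h2 : (Bᵀ.mulVec w i)^2 = 0 := by
        have hi := (inv_pos.2 (hd i)).ne'
        exact (mul_eq_zero.1 this).resolve_left hi
      simpa using pow_eq_zero_iff (n := 2) (by norm_num) |>.1 h2
    · intro h
      rw [hQ, ← Matrix.mulVec_mulVec, ← Matrix.mulVec_mulVec, h]
      simp
  -- Q 1 = 0
  have hQone : Q.mulVec (fun _ => (1:ℝ)) = 0 :=
    (hQker _).2 ((hker _).2 ⟨1, rfl⟩)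
  -- linear map picture
  set T := Q.mulVecLin with hT
  set S : (Fin n → ℝ) →ₗ[ℝ] ℝ :=
    { toFun := fun v => ∑ i, v i
      map_add' := by intro a b; simp [Finset.sum_add_distrib]
      map_smul' := by intro c a; simp [Finset.mul_sum] } with hS
  have hone : (fun _ => (1:ℝ)) ≠ (0 : Fin n → ℝ) := by
    intro h
    have := congrFun h ⟨0, hn⟩
    simp at this
  have hkerT : LinearMap.ker T = Submodule.span ℝ {(fun _ => (1:ℝ) : Fin n → ℝ)} := by
    ext v
    rw [LinearMap.mem_ker]
    simp only [hT, Matrix.mulVecLin_apply]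
    rw [hQker, hker]
    constructor
    · rintro ⟨c, rfl⟩
      exact Submodule.mem_span_singleton.2 ⟨c, by funext i; simp⟩
    · intro hv
      rcases Submodule.mem_span_singleton.1 hv with ⟨c, rfl⟩
      exact ⟨c, by funext i; simp⟩
  have hfrkerT : Module.finrank ℝ (LinearMap.ker T) = 1 := by
    rw [hkerT]; exact finrank_span_singleton hone
  have hSsurj : LinearMap.range S = ⊤ := by
    rw [LinearMap.range_eq_top]
    intro x
    refine ⟨fun _ => x / n, ?_⟩
    simp [hS]
    field_simp
  have hfrkerS : Module.finrank ℝ (LinearMap.ker S) = n - 1 := by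
    have h1 := LinearMap.finrank_range_add_finrank_ker S
    rw [hSsurj] at h1
    simp only [finrank_top, Module.finrank_self, Module.finrank_pi, Fintype.card_fin] at h1
    omega
  have hfrrangeT : Module.finrank ℝ (LinearMap.range T) = n - 1 := by
    have h1 := LinearMap.finrank_range_add_finrank_ker T
    rw [hfrkerT, Module.finrank_pi, Fintype.card_fin] at h1
    omega
  have hle : LinearMap.range T ≤ LinearMap.ker S := by
    rintro x ⟨w, rfl⟩
    simp only [LinearMap.mem_ker, hS, hT, Matrix.mulVecLin_apply, LinearMap.coe_mk,
      AddHom.coe_mk]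
    have : ∑ i, Q.mulVec w i = (fun _ => (1:ℝ)) ⬝ᵥ Q.mulVec w := by
      simp [dotProduct]
    rw [this, Matrix.dotProduct_mulVec, ← Matrix.mulVec_transpose, hQsymm, hQone]
    simp
  have hrange : LinearMap.range T = LinearMap.ker S :=
    Submodule.eq_of_le_of_finrank_eq hle (by rw [hfrrangeT, hfrkerS])
  -- ν is in the range of Q
  have hνmem : ν ∈ LinearMap.range T := by
    rw [hrange]; simpa [hS] using hbal
  rcases hνmem with ⟨w, hw⟩
  simp only [hT, Matrix.mulVecLin_apply] at hw
  -- key computation: ν ⬝ᵥ L ν = w ⬝ᵥ Q w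
  have hkey : ν ⬝ᵥ L.mulVec ν = w ⬝ᵥ Q.mulVec w := by
    have hQw : Q.mulVec w = Matrix.vecMul w Q := by
      rw [← Matrix.mulVec_transpose, hQsymm]
    rw [← hw, hQw, Matrix.dotProduct_mulVec, Matrix.vecMul_vecMul, ← hQw,
      Matrix.dotProduct_mulVec, Matrix.vecMul_vecMul, hL,
      ← Matrix.dotProduct_mulVec]
  rw [hkey, hquad]
  -- Bᵀ w ≠ 0
  have hBw : Bᵀ.mulVec w ≠ 0 := by
    intro h
    apply hν
    rw [← hw, (hQker w).2 h]
  have ⟨i, hi⟩ : ∃ i, Bᵀ.mulVec w i ≠ 0 := by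
    by_contra h
    push_neg at h
    exact hBw (funext h)
  apply Finset.sum_pos' (fun j _ => mul_nonneg (inv_nonneg.2 (hd j).le) (sq_nonneg _))
  exact ⟨i, Finset.mem_univ i, mul_pos (inv_pos.2 (hd i)) (by positivity)⟩
end

section
/- Let Q be a real symmetric n×n matrix all of whose row sums are zero, and let q ∈ {1,…,n} be an index such that the principal submatrix Q_q (delete row and column q) is invertible. Let L_q be the n×n matrix obtained from (Q_q)⁻¹ by inserting a zero row and a zero column at position q. Then Q·L_q = I + R_q, where I is the n×n identity matrix and R_q is the matrix whose q-th row has all entries equal to −1 and all other entries are 0; consequently Q·L_q·Q = Q, i.e. L_q is a generalized inverse of Q. (Paper: equation (4.1) and Remark 4.2(ii).) -/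
open Matrix

/-- **Equation (4.1) and Remark 4.2(ii).** Let `Q` be a real symmetric matrix with zero row
sums, let `q` be an index such that the principal submatrix `Q_q` (delete row and column `q`)
is invertible, and let `L_q` be obtained from `(Q_q)⁻¹` by inserting a zero row and a zero
column at position `q`. Then `Q * L_q = I + R_q`, where `R_q` has all entries `-1` in row `q`
and zeros elsewhere; consequently `Q * L_q * Q = Q`, i.e. `L_q` is a generalized inverse. -/
theorem padded_inverse_is_generalized_inverse
    {n : ℕ} (Q : Matrix (Fin (n + 1)) (Fin (n + 1)) ℝ)
    (hQsymm : Q.IsSymm)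
    (hrow : ∀ i, ∑ j, Q i j = 0)
    (q : Fin (n + 1))
    (hinv : IsUnit (Q.submatrix q.succAbove q.succAbove).det)
    (Lq : Matrix (Fin (n + 1)) (Fin (n + 1)) ℝ)
    (hpad : ∀ i j : Fin n,
      Lq (q.succAbove i) (q.succAbove j) = (Q.submatrix q.succAbove q.succAbove)⁻¹ i j)
    (hrow0 : ∀ j, Lq q j = 0) (hcol0 : ∀ i, Lq i q = 0) :
    Q * Lq = 1 + Matrix.of (fun i _ => if i = q then (-1 : ℝ) else 0) ∧
    Q * Lq * Q = Q := by
  set A := Q.submatrix q.succAbove q.succAbove with hA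
  have hAinv : A * A⁻¹ = 1 := Matrix.mul_nonsing_inv A hinv
  have hsym : ∀ i j, Q i j = Q j i := by
    intro i j
    have := congrFun (congrFun hQsymm j) i
    simpa [Matrix.transpose_apply] using this
  have hcol : ∀ j, ∑ i, Q i j = 0 := by
    intro j
    calc ∑ i, Q i j = ∑ i, Q j i := by simp [hsym]
    _ = 0 := hrow j
  have hmain : Q * Lq = 1 + Matrix.of (fun i _ => if i = q then (-1 : ℝ) else 0) := by
    ext i j
    rw [Matrix.mul_apply]
    rw [Fin.sum_univ_succAbove (fun k => Q i k * Lq k j) q]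
    rw [hrow0 j, mul_zero, zero_add]
    rcases eq_or_ne j q with hj | hj
    · simp only [hj, hcol0, mul_zero, Finset.sum_const_zero]
      rcases eq_or_ne i q with hi | hi <;>
        simp [Matrix.one_apply, Matrix.add_apply, hi, hj]
    · obtain ⟨j', rfl⟩ := Fin.exists_succAbove_eq hj
      simp only [hpad]
      rcases eq_or_ne i q with hi | hi
      · rw [hi]
        have hq : ∀ k : Fin n, Q q (q.succAbove k)
            = -∑ i', Q (q.succAbove i') (q.succAbove k) := by
          intro k
          have := hcol (q.succAbove k)
          rw [Fin.sum_univ_succAbove (fun m => Q m (q.succAbove k)) q] at this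
          linarith
        have : ∑ k, Q q (q.succAbove k) * A⁻¹ k j'
            = -∑ i', ∑ k, A i' k * A⁻¹ k j' := by
          have hq' : ∀ k : Fin n, Q q (q.succAbove k) = -∑ i', A i' k := by
            intro k; rw [hq k]; simp [hA]
          have hcomm : (∑ k : Fin n, -∑ i' : Fin n, A i' k * A⁻¹ k j')
              = -∑ i' : Fin n, ∑ k : Fin n, A i' k * A⁻¹ k j' := by
            rw [Finset.sum_neg_distrib, Finset.sum_comm]
          rw [← hcomm]
          refine Finset.sum_congr rfl fun k _ => ?_
          rw [hq' k, neg_mul, Finset.sum_mul]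
        rw [this]
        have h1 : ∀ i', ∑ k, A i' k * A⁻¹ k j' = (1 : Matrix (Fin n) (Fin n) ℝ) i' j' := by
          intro i'
          rw [← Matrix.mul_apply, hAinv]
        simp only [h1]
        have hne : q ≠ q.succAbove j' := (q.succAbove_ne j').symm
        simp [Matrix.one_apply, Matrix.add_apply, hne, Finset.sum_ite_eq]
      · obtain ⟨i', rfl⟩ := Fin.exists_succAbove_eq hi
        have : ∑ k, Q (q.succAbove i') (q.succAbove k) * A⁻¹ k j'
            = (A * A⁻¹) i' j' := by
          rw [Matrix.mul_apply]
          exact Finset.sum_congr rfl fun k _ => by simp [hA, Matrix.submatrix_apply]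
        rw [this, hAinv]
        have hne : q.succAbove i' ≠ q := q.succAbove_ne i'
        have hinj : (q.succAbove i' = q.succAbove j') ↔ i' = j' :=
          (Fin.succAbove_right_injective (p := q)).eq_iff
        simp [Matrix.one_apply, Matrix.add_apply, hne, hinj]
  refine ⟨hmain, ?_⟩
  rw [hmain, add_mul, one_mul]
  have : (Matrix.of (fun i _ => if i = q then (-1 : ℝ) else 0)) * Q = 0 := by
    ext i j
    rw [Matrix.mul_apply]
    rcases eq_or_ne i q with hi | hi
    · simp [hi, hcol j]
    · simp [hi]
  rw [this, add_zero]
end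

section
/- Let Q be a real symmetric n×n matrix all of whose row sums are zero, and let q, q' ∈ {1,…,n} be indices such that the principal submatrices Q_q and Q_{q'} are invertible. Let L_q and L_{q'} be the corresponding padded inverses. Then for all indices x, y, z, w ∈ {1,…,n}: (δ_x − δ_y)ᵀ·L_q·(δ_z − δ_w) = (δ_x − δ_y)ᵀ·L_{q'}·(δ_z − δ_w). In other words, the cross ratio ξ(x,y,z,w) is independent of the choice of the base point q. (Paper: Lemma 6.2(a).) -/
open Matrix

/-- **Lemma 6.2(a).** Let `Q` be a real symmetric matrix with zero row sums, and `q`, `q'`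
two indices whose principal submatrices `Q_q`, `Q_{q'}` are invertible, with padded
inverses `L_q`, `L_{q'}`. Then for all indices `x, y, z, w` the cross ratio
`(δ_x - δ_y)ᵀ L_q (δ_z - δ_w)` does not depend on the base point `q`. -/
theorem cross_ratio_independent_of_base_point
    {n : ℕ} (Q : Matrix (Fin (n + 1)) (Fin (n + 1)) ℝ)
    (hQsymm : Q.IsSymm)
    (hrow : ∀ i, ∑ j, Q i j = 0)
    (q q' : Fin (n + 1))
    (hinv : IsUnit (Q.submatrix q.succAbove q.succAbove).det)
    (hinv' : IsUnit (Q.submatrix q'.succAbove q'.succAbove).det)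
    (Lq : Matrix (Fin (n + 1)) (Fin (n + 1)) ℝ)
    (hpad : ∀ i j : Fin n,
      Lq (q.succAbove i) (q.succAbove j) = (Q.submatrix q.succAbove q.succAbove)⁻¹ i j)
    (hrow0 : ∀ j, Lq q j = 0) (hcol0 : ∀ i, Lq i q = 0)
    (Lq' : Matrix (Fin (n + 1)) (Fin (n + 1)) ℝ)
    (hpad' : ∀ i j : Fin n,
      Lq' (q'.succAbove i) (q'.succAbove j) = (Q.submatrix q'.succAbove q'.succAbove)⁻¹ i j)
    (hrow0' : ∀ j, Lq' q' j = 0) (hcol0' : ∀ i, Lq' i q' = 0)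
    (x y z w : Fin (n + 1)) :
    (Pi.single x 1 - Pi.single y 1) ⬝ᵥ Lq.mulVec (Pi.single z 1 - Pi.single w 1) =
    (Pi.single x 1 - Pi.single y 1) ⬝ᵥ Lq'.mulVec (Pi.single z 1 - Pi.single w 1) := by
  classical
  set v : Fin (n + 1) → ℝ := Pi.single z 1 - Pi.single w 1 with hv
  have hsumv : ∑ c, v c = 0 := by
    simp [hv, Finset.sum_sub_distrib]
  -- Main computation: Q * L applied to a zero-sum vector gives the vector back.
  have key : ∀ (p : Fin (n + 1)) (L : Matrix (Fin (n + 1)) (Fin (n + 1)) ℝ),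
      IsUnit (Q.submatrix p.succAbove p.succAbove).det →
      (∀ i j : Fin n, L (p.succAbove i) (p.succAbove j) =
        (Q.submatrix p.succAbove p.succAbove)⁻¹ i j) →
      (∀ j, L p j = 0) → (∀ i, L i p = 0) →
      Q *ᵥ (L *ᵥ v) = v := by
    intro p L hu hp hr0 hc0
    set A := Q.submatrix p.succAbove p.succAbove with hA
    have hAinv : A * A⁻¹ = 1 := Matrix.mul_nonsing_inv A hu
    have hQL : Q * L = 1 - Matrix.of (fun a _ : Fin (n + 1) => if a = p then (1 : ℝ) else 0) := by
      ext a b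
      simp only [Matrix.mul_apply, Matrix.sub_apply, Matrix.one_apply, Matrix.of_apply]
      rw [Fin.sum_univ_succAbove (fun c => Q a c * L c b) p, hr0, mul_zero, zero_add]
      rcases eq_or_ne b p with rfl | hbp
      · rcases eq_or_ne a b with rfl | hab
        · simp [hc0]
        · simp [hc0, hab, fun h : a = b => hab h]
      · obtain ⟨j, hj⟩ := Fin.exists_succAbove_eq hbp
        subst hj
        rcases eq_or_ne a p with hap | hap
        · -- row p: column sums give the value -1
          rw [hap]
          have hcol : ∀ i : Fin n, Q p (p.succAbove i) = -∑ i', A i' i := by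
            intro i
            have h0 : ∑ c, Q c (p.succAbove i) = 0 := by
              calc ∑ c, Q c (p.succAbove i) = ∑ c, Q (p.succAbove i) c :=
                    Finset.sum_congr rfl fun c _ => hQsymm.apply _ _
                _ = 0 := hrow _
            rw [Fin.sum_univ_succAbove (fun c => Q c (p.succAbove i)) p] at h0
            have : ∑ i', A i' i = ∑ i' : Fin n, Q (p.succAbove i') (p.succAbove i) := rfl
            rw [this]
            linarith
          have hne : p ≠ p.succAbove j := (Fin.succAbove_ne p j).symm
          simp only [hp, hcol, if_neg hne, if_pos rfl, zero_sub]
          rw [show (∑ i, (-∑ i', A i' i) * A⁻¹ i j) = -∑ i, ∑ i', A i' i * A⁻¹ i j by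
            simp [neg_mul, Finset.sum_mul]]
          rw [Finset.sum_comm]
          have : ∀ i' : Fin n, ∑ i, A i' i * A⁻¹ i j = (1 : Matrix (Fin n) (Fin n) ℝ) i' j := by
            intro i'
            rw [← hAinv, Matrix.mul_apply]
          simp only [this, Matrix.one_apply]
          simp
        · obtain ⟨i0, hi0⟩ := Fin.exists_succAbove_eq hap
          subst hi0
          have : ∑ i, Q (p.succAbove i0) (p.succAbove i) * L (p.succAbove i) (p.succAbove j)
              = (A * A⁻¹) i0 j := by
            rw [Matrix.mul_apply]
            exact Finset.sum_congr rfl fun i _ => by rw [hp]; rfl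
          have hiff : p.succAbove i0 = p.succAbove j ↔ i0 = j :=
            ⟨fun h => p.succAbove_right_injective h, fun h => by rw [h]⟩
          rw [this, hAinv, Matrix.one_apply, if_neg hap, sub_zero]
          simp [hiff]
    rw [Matrix.mulVec_mulVec, hQL, Matrix.sub_mulVec, Matrix.one_mulVec]
    have hz : Matrix.of (fun a _ : Fin (n + 1) => if a = p then (1 : ℝ) else 0) *ᵥ v = 0 := by
      funext a
      by_cases h : a = p
      · simp [Matrix.mulVec, dotProduct, h, hsumv]
      · simp [Matrix.mulVec, dotProduct, h]
    rw [hz, sub_zero]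
  -- Kernel of Q consists of constant vectors.
  have hker : ∀ u : Fin (n + 1) → ℝ, Q *ᵥ u = 0 → ∀ a, u a = u q := by
    intro u hu0 a
    set A := Q.submatrix q.succAbove q.succAbove with hA
    have hws : A *ᵥ (fun i => u (q.succAbove i) - u q) = 0 := by
      funext i
      have h1 : ∑ c, Q (q.succAbove i) c * u c = 0 := by
        have := congrFun hu0 (q.succAbove i)
        simpa [Matrix.mulVec, dotProduct] using this
      have h2 : ∑ j, Q (q.succAbove i) (q.succAbove j) = - Q (q.succAbove i) q := by
        have := hrow (q.succAbove i)
        rw [Fin.sum_univ_succAbove (fun c => Q (q.succAbove i) c) q] at this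
        linarith
      have h3 : ∑ j, Q (q.succAbove i) (q.succAbove j) * u (q.succAbove j)
          = - (Q (q.succAbove i) q * u q) := by
        rw [Fin.sum_univ_succAbove (fun c => Q (q.succAbove i) c * u c) q] at h1
        linarith
      show ∑ j, A i j * (u (q.succAbove j) - u q) = 0
      have : ∀ j : Fin n, A i j = Q (q.succAbove i) (q.succAbove j) := fun j => rfl
      simp_rw [this, mul_sub]
      rw [Finset.sum_sub_distrib, h3, ← Finset.sum_mul, h2]
      ring
    have hAi : A⁻¹ * A = 1 := Matrix.nonsing_inv_mul A hinv
    have hws0 : (fun i => u (q.succAbove i) - u q) = 0 := by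
      have := congrArg (fun t => A⁻¹ *ᵥ t) hws
      simpa [Matrix.mulVec_mulVec, hAi] using this
    rcases eq_or_ne a q with rfl | haq
    · rfl
    · obtain ⟨i, hi⟩ := Fin.exists_succAbove_eq haq
      have := congrFun hws0 i
      simp only [Pi.zero_apply, sub_eq_zero] at this
      rw [← hi, this]
  have h1 := key q Lq hinv hpad hrow0 hcol0
  have h2 := key q' Lq' hinv' hpad' hrow0' hcol0'
  set u : Fin (n + 1) → ℝ := Lq *ᵥ v - Lq' *ᵥ v with hu
  have hQu : Q *ᵥ u = 0 := by rw [hu, Matrix.mulVec_sub, h1, h2, sub_self]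
  have hc := hker u hQu
  have hfin : (Pi.single x 1 - Pi.single y 1) ⬝ᵥ (Lq *ᵥ v)
      - (Pi.single x 1 - Pi.single y 1) ⬝ᵥ (Lq' *ᵥ v) = 0 := by
    rw [← dotProduct_sub, ← hu]
    have hd : (Pi.single x 1 - Pi.single y 1) ⬝ᵥ u = u x - u y := by
      simp [sub_dotProduct, dotProduct, Pi.single_apply, ite_mul, sub_mul,
        Finset.sum_sub_distrib, Finset.sum_ite_eq, Finset.sum_ite_eq']
    rw [hd, hc x, hc y, sub_self]
  exact sub_eq_zero.mp hfin
end

section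
/- Let Q be a real symmetric n×n matrix all of whose row sums are zero, and let y, w ∈ {1,…,n} be indices such that the principal submatrices Q_y and Q_w are invertible; let L_y and L_w be the corresponding padded inverses. Then for all indices x, z ∈ {1,…,n}: (L_y)_{xz} − (L_y)_{xw} = (L_w)_{xz} − (L_w)_{yz}. In terms of potential kernels this reads j_y(x,z) − j_y(x,w) = j_w(x,z) − j_w(y,z), the reciprocity theorem for electrical networks. (Paper: Example 6.3.) -/
open Matrix

/-- **Example 6.3 (reciprocity theorem).** Let `Q` be a real symmetric matrix with zero row
sums, and let `y`, `w` be indices whose principal submatrices `Q_y`, `Q_w` are invertible,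
with padded inverses `L_y`, `L_w`. Then for all indices `x, z`:
`(L_y)_{xz} - (L_y)_{xw} = (L_w)_{xz} - (L_w)_{yz}`, i.e.
`j_y(x,z) - j_y(x,w) = j_w(x,z) - j_w(y,z)`. -/
theorem reciprocity_theorem
    {n : ℕ} (Q : Matrix (Fin (n + 1)) (Fin (n + 1)) ℝ)
    (hQsymm : Q.IsSymm)
    (hrow : ∀ i, ∑ j, Q i j = 0)
    (y w : Fin (n + 1))
    (hinvy : IsUnit (Q.submatrix y.succAbove y.succAbove).det)
    (hinvw : IsUnit (Q.submatrix w.succAbove w.succAbove).det)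
    (Ly : Matrix (Fin (n + 1)) (Fin (n + 1)) ℝ)
    (hpady : ∀ i j : Fin n,
      Ly (y.succAbove i) (y.succAbove j) = (Q.submatrix y.succAbove y.succAbove)⁻¹ i j)
    (hrow0y : ∀ j, Ly y j = 0) (hcol0y : ∀ i, Ly i y = 0)
    (Lw : Matrix (Fin (n + 1)) (Fin (n + 1)) ℝ)
    (hpadw : ∀ i j : Fin n,
      Lw (w.succAbove i) (w.succAbove j) = (Q.submatrix w.succAbove w.succAbove)⁻¹ i j)
    (hrow0w : ∀ j, Lw w j = 0) (hcol0w : ∀ i, Lw i w = 0)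
    (x z : Fin (n + 1)) :
    Ly x z - Ly x w = Lw x z - Lw y z := by
  -- trivial cases
  rcases eq_or_ne x y with rfl | hx
  · rw [hrow0y, hrow0y, sub_self, sub_self]
  rcases eq_or_ne z w with rfl | hz
  · rw [hcol0w x, hcol0w y, sub_self, sub_self]
  obtain ⟨a, rfl⟩ := Fin.exists_succAbove_eq hx
  obtain ⟨d, rfl⟩ := Fin.exists_succAbove_eq hz
  set A := Q.submatrix y.succAbove y.succAbove with hA
  set B := Q.submatrix w.succAbove w.succAbove with hB
  have hAinv : A⁻¹ * A = 1 := Matrix.nonsing_inv_mul A hinvy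
  have hBinv : B * B⁻¹ = 1 := Matrix.mul_nonsing_inv B hinvw
  -- deleted column of Q in terms of the rest, at y
  have hQy : ∀ i, Q i y = -∑ j, Q i (y.succAbove j) := by
    intro i
    have h := hrow i
    rw [Fin.sum_univ_succAbove (fun j => Q i j) y] at h
    linarith
  -- deleted row of Q in terms of the rest, at w
  have hQw : ∀ j, Q w j = -∑ i, Q (w.succAbove i) j := by
    intro j
    have h := hrow j
    rw [Fin.sum_univ_succAbove (fun i => Q j i) w] at h
    have h2 : ∑ i : Fin n, Q (w.succAbove i) j = ∑ i : Fin n, Q j (w.succAbove i) :=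
      Finset.sum_congr rfl fun i _ => hQsymm.apply j (w.succAbove i)
    rw [hQsymm.apply j w, h2]
    linarith
  -- inner sums, left association
  have key1 : ∀ c', (∑ b, Ly (y.succAbove a) b * Q b (y.succAbove c'))
      = if a = c' then 1 else 0 := by
    intro c'
    rw [Fin.sum_univ_succAbove (fun b => Ly (y.succAbove a) b * Q b (y.succAbove c')) y]
    have h := congrFun (congrFun hAinv a) c'
    rw [Matrix.mul_apply] at h
    simp only [hcol0y, zero_mul, zero_add, hpady, Matrix.one_apply] at h ⊢
    rw [← h]
    exact Finset.sum_congr rfl fun b' _ => rfl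
  have key1y : (∑ b, Ly (y.succAbove a) b * Q b y) = -1 := by
    rw [Fin.sum_univ_succAbove (fun b => Ly (y.succAbove a) b * Q b y) y]
    simp only [hcol0y, zero_mul, zero_add, hpady]
    have : ∀ b' : Fin n, A⁻¹ a b' * Q (y.succAbove b') y
        = ∑ c', -(A⁻¹ a b' * A b' c') := by
      intro b'
      rw [hQy (y.succAbove b'), mul_neg, Finset.mul_sum, ← Finset.sum_neg_distrib]
      rfl
    rw [Finset.sum_congr rfl fun b' _ => this b', Finset.sum_comm]
    have : ∀ c' : Fin n, (∑ b' : Fin n, -(A⁻¹ a b' * A b' c'))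
        = -((1 : Matrix (Fin n) (Fin n) ℝ) a c') := by
      intro c'
      rw [Finset.sum_neg_distrib, ← Matrix.mul_apply, hAinv]
    rw [Finset.sum_congr rfl fun c' _ => this c']
    simp [Matrix.one_apply]
  -- inner sums, right association
  have key2 : ∀ b', (∑ c, Q (w.succAbove b') c * Lw c (w.succAbove d))
      = if b' = d then 1 else 0 := by
    intro b'
    rw [Fin.sum_univ_succAbove (fun c => Q (w.succAbove b') c * Lw c (w.succAbove d)) w]
    have h := congrFun (congrFun hBinv b') d
    rw [Matrix.mul_apply] at h
    simp only [hrow0w, mul_zero, zero_add, hpadw, Matrix.one_apply] at h ⊢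
    rw [← h]
    exact Finset.sum_congr rfl fun c' _ => rfl
  have key2w : (∑ c, Q w c * Lw c (w.succAbove d)) = -1 := by
    rw [Fin.sum_univ_succAbove (fun c => Q w c * Lw c (w.succAbove d)) w]
    simp only [hrow0w, mul_zero, zero_add, hpadw]
    have : ∀ c' : Fin n, Q w (w.succAbove c') * B⁻¹ c' d
        = ∑ b', -(B b' c' * B⁻¹ c' d) := by
      intro c'
      rw [hQw (w.succAbove c'), neg_mul, Finset.sum_mul, ← Finset.sum_neg_distrib]
      rfl
    rw [Finset.sum_congr rfl fun c' _ => this c', Finset.sum_comm]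
    have : ∀ b' : Fin n, (∑ c' : Fin n, -(B b' c' * B⁻¹ c' d))
        = -((1 : Matrix (Fin n) (Fin n) ℝ) b' d) := by
      intro b'
      rw [Finset.sum_neg_distrib, ← Matrix.mul_apply, hBinv]
    rw [Finset.sum_congr rfl fun b' _ => this b']
    simp [Matrix.one_apply]
  -- the double sum, two ways
  have eT : (∑ b, Ly (y.succAbove a) b * ∑ c, Q b c * Lw c (w.succAbove d))
      = ∑ c, (∑ b, Ly (y.succAbove a) b * Q b c) * Lw c (w.succAbove d) := by
    simp only [Finset.mul_sum, Finset.sum_mul, mul_assoc]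
    exact Finset.sum_comm
  have e1 : (∑ b, Ly (y.succAbove a) b * ∑ c, Q b c * Lw c (w.succAbove d))
      = Ly (y.succAbove a) (w.succAbove d) - Ly (y.succAbove a) w := by
    rw [Fin.sum_univ_succAbove
      (fun b => Ly (y.succAbove a) b * ∑ c, Q b c * Lw c (w.succAbove d)) w, key2w]
    rw [Finset.sum_congr rfl fun b' _ => by rw [key2 b']]
    simp [Finset.sum_ite_eq', mul_comm, sub_eq_neg_add]
  have e2 : (∑ c, (∑ b, Ly (y.succAbove a) b * Q b c) * Lw c (w.succAbove d))
      = Lw (y.succAbove a) (w.succAbove d) - Lw y (w.succAbove d) := by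
    rw [Fin.sum_univ_succAbove
      (fun c => (∑ b, Ly (y.succAbove a) b * Q b c) * Lw c (w.succAbove d)) y, key1y]
    rw [Finset.sum_congr rfl fun c' _ => by rw [key1 c']]
    simp [Finset.sum_ite_eq, sub_eq_neg_add]
  rw [← e1, eT, e2]
end

section
/- Let Q be a real symmetric n×n matrix (n ≥ 2) with nonpositive off-diagonal entries, zero row sums, and kernel exactly the span of the all-ones vector 𝟙 ∈ ℝⁿ. Let L be any generalized inverse of Q, and for indices x, y, z ∈ {1,…,n} define j_z(x,y) := (δ_x − δ_z)ᵀ·L·(δ_y − δ_z). Then 0 ≤ j_z(x,y) ≤ j_z(x,x) for all x, y, z. (Paper: Remark 3.2(iii), nonnegativity and boundedness of the j-function.) -/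
open Matrix

/-- The sum-of-coordinates linear functional. -/
private def sumLM (n : ℕ) : (Fin n → ℝ) →ₗ[ℝ] ℝ where
  toFun v := ∑ i, v i
  map_add' v w := by simp [Finset.sum_add_distrib]
  map_smul' c v := by simp [Finset.mul_sum]

/-- Any vector with zero coordinate sum is in the range of `Q`. -/
private lemma exists_sol {n : ℕ} (hn : 2 ≤ n) (Q : Matrix (Fin n) (Fin n) ℝ)
    (hQsymm : Q.IsSymm)
    (hrow : ∀ i, ∑ j, Q i j = 0)
    (hker : ∀ v : Fin n → ℝ, Q.mulVec v = 0 ↔ ∃ c : ℝ, v = fun _ => c)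
    (w : Fin n → ℝ) (hw : ∑ i, w i = 0) : ∃ a, Q.mulVec a = w := by
  have hpos : 0 < n := by omega
  haveI : NeZero n := ⟨by omega⟩
  set T := Q.mulVecLin with hT
  -- kernel of T is the span of the all-ones vector
  have hkerT : LinearMap.ker T = Submodule.span ℝ {(fun _ => (1:ℝ) : Fin n → ℝ)} := by
    ext v
    rw [LinearMap.mem_ker, Submodule.mem_span_singleton]
    constructor
    · intro h
      obtain ⟨c, hc⟩ := (hker v).mp h
      exact ⟨c, by funext i; simp [hc]⟩
    · rintro ⟨c, rfl⟩
      apply (hker _).mpr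
      exact ⟨c, by funext i; simp⟩
  have hone : (fun _ => (1:ℝ) : Fin n → ℝ) ≠ 0 := by
    intro h
    have := congrFun h ⟨0, hpos⟩
    simp at this
  have hkdim : Module.finrank ℝ (LinearMap.ker T) = 1 := by
    rw [hkerT]; exact finrank_span_singleton hone
  have hrange : Module.finrank ℝ (LinearMap.range T) + 1 = n := by
    have := LinearMap.finrank_range_add_finrank_ker T
    rw [hkdim] at this
    simpa using this
  -- sum functional is surjective
  have hσsurj : LinearMap.range (sumLM n) = ⊤ := by
    rw [LinearMap.range_eq_top]
    intro c
    refine ⟨Pi.single ⟨0, hpos⟩ c, ?_⟩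
    simp [sumLM]
  have hσdim : Module.finrank ℝ (LinearMap.ker (sumLM n)) + 1 = n := by
    have := LinearMap.finrank_range_add_finrank_ker (sumLM n)
    rw [hσsurj] at this
    simp at this
    omega
  -- range T ⊆ ker σ
  have hle : LinearMap.range T ≤ LinearMap.ker (sumLM n) := by
    rintro _ ⟨a, rfl⟩
    show ∑ i, (Q.mulVec a) i = 0
    simp only [mulVec, dotProduct]
    rw [Finset.sum_comm]
    apply Finset.sum_eq_zero
    intro j _
    rw [← Finset.sum_mul]
    have : ∑ i, Q i j = 0 := by
      have := hrow j
      calc ∑ i, Q i j = ∑ i, Q j i := by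
            apply Finset.sum_congr rfl
            intro i _
            exact (hQsymm.apply i j).symm ▸ rfl
        _ = 0 := hrow j
    rw [this, zero_mul]
  have heq : LinearMap.range T = LinearMap.ker (sumLM n) :=
    Submodule.eq_of_le_of_finrank_le hle (by omega)
  have hwmem : w ∈ LinearMap.ker (sumLM n) := hw
  rw [← heq] at hwmem
  obtain ⟨a, ha⟩ := hwmem
  exact ⟨a, ha⟩

/-- Maximum principle: a solution of `Q a = δ_x - δ_z` attains its maximum at `x`. -/
private lemma max_principle {n : ℕ} (hn : 2 ≤ n) (Q : Matrix (Fin n) (Fin n) ℝ)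
    (hQsymm : Q.IsSymm)
    (hoff : ∀ i j, i ≠ j → Q i j ≤ 0)
    (hrow : ∀ i, ∑ j, Q i j = 0)
    (hker : ∀ v : Fin n → ℝ, Q.mulVec v = 0 ↔ ∃ c : ℝ, v = fun _ => c)
    (x z : Fin n) (a : Fin n → ℝ)
    (ha : Q.mulVec a = Pi.single x 1 - Pi.single z 1) :
    ∀ y, a y ≤ a x := by
  haveI : Nonempty (Fin n) := ⟨x⟩
  set M := Finset.univ.sup' ⟨x, Finset.mem_univ x⟩ a with hM
  have hle : ∀ i, a i ≤ M := fun i => Finset.le_sup' a (Finset.mem_univ i)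
  obtain ⟨m, -, hm⟩ := Finset.exists_mem_eq_sup' ⟨x, Finset.mem_univ x⟩ a
  set S : Finset (Fin n) := Finset.univ.filter (fun i => a i = M) with hS
  have hmS : m ∈ S := by simp [hS, hm.symm, hM]
  suffices hxs : x ∈ S by
    intro y
    have : a x = M := by simpa [hS] using hxs
    rw [this]; exact hle y
  by_contra hx
  have hxM : a x ≠ M := by simpa [hS] using hx
  -- Step 1: for i ∈ S, j ∉ S, Q i j = 0
  have step1 : ∀ i ∈ S, ∀ j, j ∉ S → Q i j = 0 := by
    intro i hi j hj
    have hiM : a i = M := by simpa [hS] using hi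
    have hix : i ≠ x := fun h => hxM (h ▸ hiM)
    have hQa : (Q.mulVec a) i ≤ 0 := by
      rw [ha]
      simp only [Pi.sub_apply]
      rw [Pi.single_eq_of_ne hix]
      have : (0:ℝ) ≤ (Pi.single z 1 : Fin n → ℝ) i := by
        rcases eq_or_ne i z with h | h
        · subst h; simp
        · simp [Pi.single_eq_of_ne h]
      linarith
    have hsum0 : ∑ j, Q i j * (a j - M) ≤ 0 := by
      have : ∑ j, Q i j * (a j - M) = (Q.mulVec a) i - (∑ j, Q i j) * M := by
        simp only [mulVec, dotProduct, Finset.sum_sub_distrib, mul_sub, ← Finset.sum_mul]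
      rw [this, hrow, zero_mul, sub_zero]
      exact hQa
    have hterms : ∀ j ∈ Finset.univ, 0 ≤ Q i j * (a j - M) := by
      intro j _
      rcases eq_or_ne j i with h | h
      · subst h; rw [hiM]; simp
      · have h1 := hoff i j (Ne.symm h)
        have h2 : a j - M ≤ 0 := by linarith [hle j]
        nlinarith
    have hz : ∑ j, Q i j * (a j - M) = 0 :=
      le_antisymm hsum0 (Finset.sum_nonneg hterms)
    have := (Finset.sum_eq_zero_iff_of_nonneg hterms).mp hz j (Finset.mem_univ j)
    have hjM : a j ≠ M := by simpa [hS] using hj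
    have : Q i j = 0 ∨ a j - M = 0 := mul_eq_zero.mp this
    rcases this with h | h
    · exact h
    · exact absurd (by linarith : a j = M) hjM
  -- Step 2: the indicator of S is in the kernel
  set u : Fin n → ℝ := fun i => if i ∈ S then 1 else 0 with hu
  have hQu : Q.mulVec u = 0 := by
    funext i
    show ∑ j, Q i j * u j = 0
    rcases Finset.mem_filter.mpr ⟨Finset.mem_univ i, rfl⟩ with _
    by_cases hi : i ∈ S
    · have : ∑ j, Q i j * u j = ∑ j, Q i j := by
        apply Finset.sum_congr rfl
        intro j _
        by_cases hj : j ∈ S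
        · simp [hu, hj]
        · simp [hu, hj, step1 i hi j hj]
      rw [this, hrow]
    · apply Finset.sum_eq_zero
      intro j _
      by_cases hj : j ∈ S
      · have : Q j i = 0 := step1 j hj i hi
        have hsym : Q i j = Q j i := by
          have := hQsymm
          rw [Matrix.IsSymm] at this
          exact (congrFun (congrFun this j) i).symm ▸ rfl
        simp [hu, hj, hsym, this]
      · simp [hu, hj]
  obtain ⟨c, hc⟩ := (hker u).mp hQu
  have h1 : u m = 1 := by simp [hu, hmS]
  have h2 : u x = 0 := by simp [hu, hx]
  rw [hc] at h1 h2
  simp at h1 h2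
  exact one_ne_zero (h1 ▸ h2 ▸ rfl : (1:ℝ) = 0)

/-- **Remark 3.2(iii).** Let `Q` be a real symmetric `n × n` matrix (`n ≥ 2`) with nonpositive
off-diagonal entries, zero row sums, and kernel exactly the span of the all-ones vector.
Let `L` be any generalized inverse of `Q`, and for indices `x, y, z` define
`j_z(x,y) := (δ_x - δ_z)ᵀ L (δ_y - δ_z)`. Then `0 ≤ j_z(x,y) ≤ j_z(x,x)` for all `x, y, z`. -/
theorem j_function_nonneg_and_bounded
    {n : ℕ} (hn : 2 ≤ n) (Q L : Matrix (Fin n) (Fin n) ℝ)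
    (hQsymm : Q.IsSymm)
    (hoff : ∀ i j, i ≠ j → Q i j ≤ 0)
    (hrow : ∀ i, ∑ j, Q i j = 0)
    (hker : ∀ v : Fin n → ℝ, Q.mulVec v = 0 ↔ ∃ c : ℝ, v = fun _ => c)
    (hL : Q * L * Q = Q) :
    let jfun : Fin n → Fin n → Fin n → ℝ := fun z x y =>
      (Pi.single x 1 - Pi.single z 1) ⬝ᵥ L.mulVec (Pi.single y 1 - Pi.single z 1)
    ∀ x y z : Fin n, 0 ≤ jfun z x y ∧ jfun z x y ≤ jfun z x x := by
  intro jfun x y z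
  have hsum : ∀ p q : Fin n, ∑ i, (Pi.single p 1 - Pi.single q 1 : Fin n → ℝ) i = 0 := by
    intro p q
    simp [Finset.sum_sub_distrib]
  obtain ⟨a, ha⟩ := exists_sol hn Q hQsymm hrow hker _ (hsum x z)
  obtain ⟨b, hb⟩ := exists_sol hn Q hQsymm hrow hker _ (hsum y z)
  -- key computation: jfun z x y' = a y' - a z whenever δ_{y'} - δ_z = Q b'
  have key : ∀ (y' : Fin n) (b' : Fin n → ℝ),
      Q.mulVec b' = Pi.single y' 1 - Pi.single z 1 →
      jfun z x y' = a y' - a z := by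
    intro y' b' hb'
    show (Pi.single x 1 - Pi.single z 1) ⬝ᵥ L.mulVec (Pi.single y' 1 - Pi.single z 1)
        = a y' - a z
    rw [← ha, ← hb']
    have hQsa : a ᵥ* Q = Q.mulVec a := by
      conv_lhs => rw [← hQsymm]
      rw [Matrix.vecMul_transpose]
    calc (Q.mulVec a) ⬝ᵥ L.mulVec (Q.mulVec b')
        = (a ᵥ* Q) ⬝ᵥ L.mulVec (Q.mulVec b') := by rw [hQsa]
      _ = a ⬝ᵥ Q.mulVec (L.mulVec (Q.mulVec b')) := (Matrix.dotProduct_mulVec a Q _).symm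
      _ = a ⬝ᵥ (Q * L * Q).mulVec b' := by rw [Matrix.mulVec_mulVec, Matrix.mulVec_mulVec]
      _ = a ⬝ᵥ (Pi.single y' 1 - Pi.single z 1) := by rw [hL, hb']
      _ = a y' - a z := by simp [dotProduct_sub]
  have h1 : jfun z x y = a y - a z := key y b hb
  have h2 : jfun z x x = a x - a z := key x a ha
  have hmax : ∀ y', a y' ≤ a x :=
    max_principle hn Q hQsymm hoff hrow hker x z a ha
  have hmin : a z ≤ a y := by
    have hneg : Q.mulVec (-a) = Pi.single z 1 - Pi.single x 1 := by
      rw [Matrix.mulVec_neg, ha]; abel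
    have := max_principle hn Q hQsymm hoff hrow hker z x (-a) hneg y
    simpa using this
  constructor
  · rw [h1]; linarith
  · rw [h1, h2]; linarith [hmax y]
end

section
/- Let B be an n×m real matrix and D an m×m diagonal matrix with positive diagonal entries, and set Q = B·D⁻¹·Bᵀ. Let L and L' be any two generalized inverses of Q. Then Bᵀ·L·B = Bᵀ·L'·B, and this common matrix Ξ := Bᵀ·L·B is symmetric. (Paper: well-definedness of the matrix of cross ratios Ξ, equation (7.1).) -/
open Matrix

lemma crm_diag_inv {m : ℕ} (d : Fin m → ℝ) (hd : ∀ i, 0 < d i) :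
    (Matrix.diagonal d)⁻¹ = Matrix.diagonal (fun i => (d i)⁻¹) := by
  refine Matrix.inv_eq_right_inv ?_
  rw [Matrix.diagonal_mul_diagonal]
  convert Matrix.diagonal_one with i
  exact mul_inv_cancel₀ (hd i).ne'

lemma crm_aux {n m : ℕ} (B : Matrix (Fin n) (Fin m) ℝ) (d : Fin m → ℝ)
    (hd : ∀ i, 0 < d i) (y : Fin n → ℝ)
    (h : (B * (Matrix.diagonal d)⁻¹ * Bᵀ).mulVec y = 0) :
    Bᵀ.mulVec y = 0 := by
  set w := Bᵀ.mulVec y with hw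
  have hdot : y ⬝ᵥ (B * (Matrix.diagonal d)⁻¹ * Bᵀ).mulVec y
      = ∑ i, (d i)⁻¹ * (w i)^2 := by
    rw [crm_diag_inv d hd, ← Matrix.mulVec_mulVec, ← Matrix.mulVec_mulVec,
      Matrix.dotProduct_mulVec, ← Matrix.mulVec_transpose]
    simp [Matrix.mulVec_diagonal, dotProduct, hw, sq, mul_comm, mul_left_comm]
  have hzero : ∑ i, (d i)⁻¹ * (w i)^2 = 0 := by rw [← hdot, h]; simp
  have hterm : ∀ i ∈ Finset.univ, (d i)⁻¹ * (w i)^2 = 0 :=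
    (Finset.sum_eq_zero_iff_of_nonneg fun i _ =>
      mul_nonneg (inv_nonneg.mpr (hd i).le) (sq_nonneg _)).mp hzero
  funext i
  have h1 := hterm i (Finset.mem_univ i)
  have hdi : (d i)⁻¹ ≠ 0 := inv_ne_zero (hd i).ne'
  have h2 : (w i)^2 = 0 := by
    rcases mul_eq_zero.mp h1 with h1 | h1
    · exact absurd h1 hdi
    · exact h1
  simpa [hw] using pow_eq_zero_iff (n := 2) (by norm_num) |>.mp h2

lemma crm_aux_mat {n m k : ℕ} (B : Matrix (Fin n) (Fin m) ℝ) (d : Fin m → ℝ)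
    (hd : ∀ i, 0 < d i) (Y : Matrix (Fin n) (Fin k) ℝ)
    (h : (B * (Matrix.diagonal d)⁻¹ * Bᵀ) * Y = 0) :
    Bᵀ * Y = 0 := by
  ext i j
  have hcol : (B * (Matrix.diagonal d)⁻¹ * Bᵀ).mulVec (fun l => Y l j) = 0 := by
    funext i'
    have := congrFun (congrFun h i') j
    simpa [Matrix.mul_apply, Matrix.mulVec, dotProduct] using this
  have := congrFun (crm_aux B d hd _ hcol) i
  simpa [Matrix.mul_apply, Matrix.mulVec, dotProduct] using this

lemma crm_abstract {n m : ℕ} (B : Matrix (Fin n) (Fin m) ℝ)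
    (Q L L' : Matrix (Fin n) (Fin n) ℝ)
    (hQsymm : Qᵀ = Q)
    (hker : ∀ Y : Matrix (Fin n) (Fin n) ℝ, Q * Y = 0 → Bᵀ * Y = 0)
    (hL : Q * L * Q = Q) (hL' : Q * L' * Q = Q) :
    Bᵀ * L * B = Bᵀ * L' * B ∧ (Bᵀ * L * B).IsSymm := by
  have left : ∀ M : Matrix (Fin n) (Fin n) ℝ, Q * M * Q = Q → Bᵀ * M * Q = Bᵀ := by
    intro M hM
    have h0 : Q * (M * Q - 1) = 0 := by
      rw [Matrix.mul_sub, Matrix.mul_one, ← Matrix.mul_assoc, hM, sub_self]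
    have := hker _ h0
    rw [Matrix.mul_sub, Matrix.mul_one, sub_eq_zero, ← Matrix.mul_assoc] at this
    exact this
  have hT : ∀ M : Matrix (Fin n) (Fin n) ℝ, Q * M * Q = Q → Q * Mᵀ * Q = Q := by
    intro M hM
    have := congrArg Matrix.transpose hM
    rwa [Matrix.transpose_mul, Matrix.transpose_mul, hQsymm, ← Matrix.mul_assoc] at this
  have right : ∀ M : Matrix (Fin n) (Fin n) ℝ, Q * M * Q = Q → Q * M * B = B := by
    intro M hM
    have := congrArg Matrix.transpose (left Mᵀ (hT M hM))
    rwa [Matrix.transpose_mul, Matrix.transpose_mul, hQsymm, Matrix.transpose_transpose,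
      Matrix.transpose_transpose, ← Matrix.mul_assoc] at this
  have key : ∀ M M' : Matrix (Fin n) (Fin n) ℝ, Q * M * Q = Q → Q * M' * Q = Q →
      Bᵀ * M * B = Bᵀ * M' * B := by
    intro M M' hM hM'
    calc Bᵀ * M * B = Bᵀ * M * (Q * M' * B) := by rw [right M' hM']
      _ = (Bᵀ * M * Q) * M' * B := by simp only [Matrix.mul_assoc]
      _ = Bᵀ * M' * B := by rw [left M hM]
  refine ⟨key L L' hL hL', ?_⟩
  have hsym := key L Lᵀ hL (hT L hL)
  show (Bᵀ * L * B)ᵀ = Bᵀ * L * B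
  rw [Matrix.transpose_mul, Matrix.transpose_mul, Matrix.transpose_transpose,
    ← Matrix.mul_assoc]
  exact hsym.symm

/-- **Well-definedness of the matrix of cross ratios Ξ (equation (7.1)).** Let
`Q = B D⁻¹ Bᵀ` with `D` a positive diagonal matrix, and let `L`, `L'` be any two
generalized inverses of `Q`. Then `Bᵀ L B = Bᵀ L' B`, and this common matrix
`Ξ := Bᵀ L B` is symmetric. -/
theorem cross_ratio_matrix_well_defined
    {n m : ℕ} (B : Matrix (Fin n) (Fin m) ℝ) (d : Fin m → ℝ)
    (hd : ∀ i, 0 < d i)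
    (L L' : Matrix (Fin n) (Fin n) ℝ)
    (hL : (B * (Matrix.diagonal d)⁻¹ * Bᵀ) * L * (B * (Matrix.diagonal d)⁻¹ * Bᵀ)
        = B * (Matrix.diagonal d)⁻¹ * Bᵀ)
    (hL' : (B * (Matrix.diagonal d)⁻¹ * Bᵀ) * L' * (B * (Matrix.diagonal d)⁻¹ * Bᵀ)
        = B * (Matrix.diagonal d)⁻¹ * Bᵀ) :
    Bᵀ * L * B = Bᵀ * L' * B ∧ (Bᵀ * L * B).IsSymm := by
  refine crm_abstract B _ L L' ?_ (fun Y hY => crm_aux_mat B d hd Y hY) hL hL'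
  rw [crm_diag_inv d hd, Matrix.transpose_mul, Matrix.transpose_mul,
    Matrix.transpose_transpose, Matrix.diagonal_transpose, Matrix.mul_assoc]
end

section
/- Let B be an n×m real matrix and D an m×m diagonal matrix with positive diagonal entries, set Q = B·D⁻¹·Bᵀ, and equip ℝᵐ with the inner product ⟨x,y⟩_D := xᵀ·D·y. Let L be any generalized inverse of Q and put P := D⁻¹·Bᵀ·L·B. Then for every x ∈ ℝᵐ: (i) B·(P·x) = B·x, so x − P·x lies in the kernel of B; and (ii) P·x is ⟨·,·⟩_D-orthogonal to every vector in the kernel of B. Consequently P is the matrix of the orthogonal projection of (ℝᵐ, ⟨·,·⟩_D) onto the orthogonal complement of ker(B), and I − P is the matrix of the orthogonal projection onto ker(B). (Paper: Proposition 7.4 / Theorem B.) -/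
open Matrix

lemma real_mul_transpose_self_eq_zero {k l : ℕ} {N : Matrix (Fin k) (Fin l) ℝ}
    (h : N * Nᵀ = 0) : N = 0 := by
  have h2 : (Nᵀ)ᴴ * Nᵀ = 0 := by
    have : (Nᵀ)ᴴ = N := by
      ext i j
      simp [Matrix.conjTranspose_apply]
    rw [this, h]
  have := Matrix.conjTranspose_mul_self_eq_zero.mp h2
  simpa using congrArg Matrix.transpose this

lemma genInv_key {k l : ℕ} (C : Matrix (Fin k) (Fin l) ℝ)
    (L Q : Matrix (Fin k) (Fin k) ℝ) (hQ : Q = C * Cᵀ)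
    (hL : Q * L * Q = Q) : Q * L * C = C := by
  have hQs : Qᵀ = Q := by rw [hQ, Matrix.transpose_mul, Matrix.transpose_transpose]
  have ht : (Q * L * C - C)ᵀ = Cᵀ * (Q * L)ᵀ - Cᵀ := by
    rw [Matrix.transpose_sub, Matrix.transpose_mul]
  have e1 : (Q * L * C - C) * (Cᵀ * (Q * L)ᵀ - Cᵀ)
      = (Q * L) * (C * Cᵀ) * (Q * L)ᵀ - (Q * L) * (C * Cᵀ) - (C * Cᵀ) * (Q * L)ᵀ
        + C * Cᵀ := by
    simp only [Matrix.sub_mul, Matrix.mul_sub, Matrix.mul_assoc]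
    abel
  rw [← hQ] at e1
  have hAQ : (Q * L) * Q = Q := hL
  rw [hAQ] at e1
  have e2 : (Q * L * C - C) * (Q * L * C - C)ᵀ = 0 := by
    rw [ht, e1]
    abel
  have := real_mul_transpose_self_eq_zero e2
  exact sub_eq_zero.mp this

/-- **Proposition 7.4 / Theorem B.** Let `Q = B D⁻¹ Bᵀ` with `D` a positive diagonal matrix,
let `L` be any generalized inverse of `Q`, and put `P := D⁻¹ Bᵀ L B`. Then for every
`x ∈ ℝᵐ`: (i) `B (P x) = B x`, so `x - P x ∈ ker B`; and (ii) `P x` is orthogonal, for the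
inner product `⟨u, v⟩_D = uᵀ D v`, to every vector in `ker B`. Hence `P` is the matrix of
the orthogonal projection of `(ℝᵐ, ⟨·,·⟩_D)` onto the orthogonal complement of `ker B`,
and `I - P` is the matrix of the orthogonal projection onto `ker B`. -/
theorem projection_via_cross_ratios
    {n m : ℕ} (B : Matrix (Fin n) (Fin m) ℝ) (d : Fin m → ℝ)
    (hd : ∀ i, 0 < d i)
    (L : Matrix (Fin n) (Fin n) ℝ)
    (hL : (B * (Matrix.diagonal d)⁻¹ * Bᵀ) * L * (B * (Matrix.diagonal d)⁻¹ * Bᵀ)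
        = B * (Matrix.diagonal d)⁻¹ * Bᵀ) :
    let P := (Matrix.diagonal d)⁻¹ * Bᵀ * L * B
    ∀ x : Fin m → ℝ,
      B.mulVec (P.mulVec x) = B.mulVec x ∧
      ∀ y : Fin m → ℝ, B.mulVec y = 0 →
        P.mulVec x ⬝ᵥ (Matrix.diagonal d).mulVec y = 0 := by
  intro P x
  have hsne : ∀ i, Real.sqrt (d i) ≠ 0 := fun i =>
    ne_of_gt (Real.sqrt_pos.mpr (hd i))
  have hDinv : (Matrix.diagonal d)⁻¹ = Matrix.diagonal (fun i => (d i)⁻¹) := by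
    apply Matrix.inv_eq_right_inv
    rw [Matrix.diagonal_mul_diagonal]
    have : (fun i => d i * (d i)⁻¹) = fun _ : Fin m => (1 : ℝ) := by
      funext i; exact mul_inv_cancel₀ (hd i).ne'
    rw [this, Matrix.diagonal_one]
  have hDinvEE : (Matrix.diagonal d)⁻¹
      = Matrix.diagonal (fun i => (Real.sqrt (d i))⁻¹)
        * Matrix.diagonal (fun i => (Real.sqrt (d i))⁻¹) := by
    rw [hDinv, Matrix.diagonal_mul_diagonal]
    have : (fun i => (d i)⁻¹) = fun i => (Real.sqrt (d i))⁻¹ * (Real.sqrt (d i))⁻¹ := by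
      funext i
      rw [← mul_inv, Real.mul_self_sqrt (hd i).le]
    rw [this]
  have hEF : Matrix.diagonal (fun i => (Real.sqrt (d i))⁻¹)
      * Matrix.diagonal (fun i => Real.sqrt (d i)) = 1 := by
    rw [Matrix.diagonal_mul_diagonal]
    have : (fun i => (Real.sqrt (d i))⁻¹ * Real.sqrt (d i)) = fun _ : Fin m => (1 : ℝ) := by
      funext i; exact inv_mul_cancel₀ (hsne i)
    rw [this, Matrix.diagonal_one]
  have hQ : B * (Matrix.diagonal d)⁻¹ * Bᵀ
      = (B * Matrix.diagonal (fun i => (Real.sqrt (d i))⁻¹))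
        * (B * Matrix.diagonal (fun i => (Real.sqrt (d i))⁻¹))ᵀ := by
    rw [Matrix.transpose_mul, Matrix.diagonal_transpose, hDinvEE]
    simp only [Matrix.mul_assoc]
  have hQLC := genInv_key (B * Matrix.diagonal (fun i => (Real.sqrt (d i))⁻¹)) L
    (B * (Matrix.diagonal d)⁻¹ * Bᵀ) hQ hL
  have h1 : (B * Matrix.diagonal (fun i => (Real.sqrt (d i))⁻¹))
      * Matrix.diagonal (fun i => Real.sqrt (d i)) = B := by
    rw [Matrix.mul_assoc, hEF, Matrix.mul_one]
  have hQLB : (B * (Matrix.diagonal d)⁻¹ * Bᵀ) * L * B = B := by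
    calc (B * (Matrix.diagonal d)⁻¹ * Bᵀ) * L * B
        = (B * (Matrix.diagonal d)⁻¹ * Bᵀ) * L
            * ((B * Matrix.diagonal (fun i => (Real.sqrt (d i))⁻¹))
              * Matrix.diagonal (fun i => Real.sqrt (d i))) := by rw [h1]
      _ = ((B * (Matrix.diagonal d)⁻¹ * Bᵀ) * L
            * (B * Matrix.diagonal (fun i => (Real.sqrt (d i))⁻¹)))
            * Matrix.diagonal (fun i => Real.sqrt (d i)) := by
          simp only [Matrix.mul_assoc]
      _ = (B * Matrix.diagonal (fun i => (Real.sqrt (d i))⁻¹))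
            * Matrix.diagonal (fun i => Real.sqrt (d i)) := by rw [hQLC]
      _ = B := h1
  have hBP : B * P = B := by
    show B * ((Matrix.diagonal d)⁻¹ * Bᵀ * L * B) = B
    calc B * ((Matrix.diagonal d)⁻¹ * Bᵀ * L * B)
        = (B * (Matrix.diagonal d)⁻¹ * Bᵀ) * L * B := by simp [Matrix.mul_assoc]
      _ = B := hQLB
  constructor
  · rw [Matrix.mulVec_mulVec, hBP]
  · intro y hy
    have hDD : Matrix.diagonal d * (Matrix.diagonal d)⁻¹ = 1 := by
      rw [hDinv, Matrix.diagonal_mul_diagonal]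
      have : (fun i => d i * (d i)⁻¹) = fun _ : Fin m => (1 : ℝ) := by
        funext i; exact mul_inv_cancel₀ (hd i).ne'
      rw [this, Matrix.diagonal_one]
    have hDP : Matrix.diagonal d * P = Bᵀ * L * B := by
      show Matrix.diagonal d * ((Matrix.diagonal d)⁻¹ * Bᵀ * L * B) = Bᵀ * L * B
      calc Matrix.diagonal d * ((Matrix.diagonal d)⁻¹ * Bᵀ * L * B)
          = (Matrix.diagonal d * (Matrix.diagonal d)⁻¹) * (Bᵀ * L * B) := by
            simp [Matrix.mul_assoc]
        _ = Bᵀ * L * B := by rw [hDD, Matrix.one_mul]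
    calc P.mulVec x ⬝ᵥ (Matrix.diagonal d).mulVec y
        = (Matrix.diagonal d).vecMul (P.mulVec x) ⬝ᵥ y := by
          rw [Matrix.dotProduct_mulVec]
      _ = ((Matrix.diagonal d)ᵀ * P).mulVec x ⬝ᵥ y := by
          rw [← Matrix.mulVec_transpose, Matrix.mulVec_mulVec]
      _ = ((Bᵀ * L) * B).mulVec x ⬝ᵥ y := by
          rw [Matrix.diagonal_transpose, hDP]
      _ = (Bᵀ * (L * B)).mulVec x ⬝ᵥ y := by rw [Matrix.mul_assoc]
      _ = ((L * B).mulVec x) ⬝ᵥ B.mulVec y := by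
          rw [← Matrix.mulVec_mulVec, Matrix.mulVec_transpose,
            Matrix.dotProduct_mulVec]
      _ = 0 := by rw [hy, dotProduct_zero]
end

section
/- Let B be an n×m real matrix and D an m×m diagonal matrix with positive diagonal entries, set Q = B·D⁻¹·Bᵀ, let L be any generalized inverse of Q, and put P := D⁻¹·Bᵀ·L·B. Then P is idempotent (P·P = P) and D·P is a symmetric matrix (equivalently, P is self-adjoint with respect to the inner product ⟨x,y⟩_D = xᵀ·D·y). (Paper: part of the content of Proposition 7.4, cf. the symmetry used in the proof of Proposition 7.2.) -/
open Matrix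

/-- **Part of Proposition 7.4.** Let `Q = B D⁻¹ Bᵀ` with `D` a positive diagonal matrix,
let `L` be any generalized inverse of `Q`, and put `P := D⁻¹ Bᵀ L B`. Then `P` is
idempotent and `D * P` is symmetric (i.e. `P` is self-adjoint for `⟨x,y⟩_D = xᵀ D y`). -/
theorem projection_matrix_idempotent_selfadjoint
    {n m : ℕ} (B : Matrix (Fin n) (Fin m) ℝ) (d : Fin m → ℝ)
    (hd : ∀ i, 0 < d i)
    (L : Matrix (Fin n) (Fin n) ℝ)
    (hL : (B * (Matrix.diagonal d)⁻¹ * Bᵀ) * L * (B * (Matrix.diagonal d)⁻¹ * Bᵀ)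
        = B * (Matrix.diagonal d)⁻¹ * Bᵀ) :
    let P := (Matrix.diagonal d)⁻¹ * Bᵀ * L * B
    P * P = P ∧ (Matrix.diagonal d * P).IsSymm := by
  intro P
  set t : Fin m → ℝ := fun i => Real.sqrt (d i) with ht
  set s : Fin m → ℝ := fun i => (t i)⁻¹ with hs
  have htpos : ∀ i, 0 < t i := fun i => Real.sqrt_pos.mpr (hd i)
  have hts : ∀ i, t i * s i = 1 := fun i => mul_inv_cancel₀ (htpos i).ne'
  have hst : ∀ i, s i * t i = 1 := fun i => inv_mul_cancel₀ (htpos i).ne'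
  have hss : ∀ i, s i * s i = (d i)⁻¹ := by
    intro i
    rw [hs, ← mul_inv, ht, Real.mul_self_sqrt (hd i).le]
  have hds : ∀ i, d i * s i = t i := by
    intro i
    simp only [hs, ht]
    rw [← div_eq_mul_inv, div_eq_iff (Real.sqrt_pos.mpr (hd i)).ne']
    exact (Real.mul_self_sqrt (hd i).le).symm
  have hDinv : (Matrix.diagonal d)⁻¹ = Matrix.diagonal s * Matrix.diagonal s := by
    rw [Matrix.diagonal_mul_diagonal]
    refine Matrix.inv_eq_right_inv ?_
    rw [Matrix.diagonal_mul_diagonal]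
    convert Matrix.diagonal_one using 2
    funext i
    exact (hss i ▸ mul_inv_cancel₀ (hd i).ne')
  have hst1 : Matrix.diagonal s * Matrix.diagonal t = (1 : Matrix (Fin m) (Fin m) ℝ) := by
    rw [Matrix.diagonal_mul_diagonal]
    convert Matrix.diagonal_one using 2
    funext i; exact hst i
  have hts1 : Matrix.diagonal t * Matrix.diagonal s = (1 : Matrix (Fin m) (Fin m) ℝ) := by
    rw [Matrix.diagonal_mul_diagonal]
    convert Matrix.diagonal_one using 2
    funext i; exact hts i
  have hdt : Matrix.diagonal d * Matrix.diagonal s = Matrix.diagonal t := by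
    rw [Matrix.diagonal_mul_diagonal]
    exact congrArg Matrix.diagonal (funext hds)
  set B' : Matrix (Fin n) (Fin m) ℝ := B * Matrix.diagonal s with hB'
  have hB'T : B'ᵀ = Matrix.diagonal s * Bᵀ := by
    rw [hB', Matrix.transpose_mul, Matrix.diagonal_transpose]
  have hQ : B * (Matrix.diagonal d)⁻¹ * Bᵀ = B' * B'ᵀ := by
    rw [hDinv, hB'T, hB', Matrix.mul_assoc, Matrix.mul_assoc, Matrix.mul_assoc]
  rw [hQ] at hL
  -- key cancellation: B'ᵀ * L * B' * B'ᵀ = B'ᵀ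
  have hconj : B'ᴴ = B'ᵀ := by
    ext i j; simp [Matrix.conjTranspose_apply]
  have hzero : (B' * B'ᴴ) * (L * (B' * B'ᵀ) - 1) = 0 := by
    rw [hconj, Matrix.mul_sub, Matrix.mul_one, sub_eq_zero, ← Matrix.mul_assoc, hL]
  rw [Matrix.self_mul_conjTranspose_mul_eq_zero, hconj, Matrix.mul_sub, Matrix.mul_one,
    sub_eq_zero] at hzero
  simp only [← Matrix.mul_assoc] at hzero
  -- hzero (hK) : B'ᵀ * L * B' * B'ᵀ = B'ᵀ
  set N : Matrix (Fin m) (Fin m) ℝ := B'ᵀ * L * B' with hN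
  have hNT : Nᵀ = B'ᵀ * Lᵀ * B' := by
    rw [hN]
    simp only [Matrix.transpose_mul, Matrix.transpose_transpose, ← Matrix.mul_assoc]
  have hNN : N * N = N := by
    rw [hN]
    simp only [← Matrix.mul_assoc]
    rw [hzero]
  have h1 : N * Nᵀ = Nᵀ := by
    rw [hNT, hN]
    simp only [← Matrix.mul_assoc]
    rw [hzero]
  have h2 : N * Nᵀ = N := by
    have := congrArg Matrix.transpose h1
    simpa [Matrix.transpose_mul, Matrix.transpose_transpose] using this
  have hNsym : Nᵀ = N := h1.symm.trans h2
  -- express P via N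
  have hP : P = Matrix.diagonal s * N * Matrix.diagonal t := by
    show (Matrix.diagonal d)⁻¹ * Bᵀ * L * B = _
    rw [hDinv, hN, hB'T, hB']
    simp only [← Matrix.mul_assoc]
    rw [Matrix.mul_assoc _ (Matrix.diagonal s) (Matrix.diagonal t), hst1, Matrix.mul_one]
  constructor
  · rw [hP]
    simp only [← Matrix.mul_assoc]
    rw [Matrix.mul_assoc _ (Matrix.diagonal t) (Matrix.diagonal s), hts1, Matrix.mul_one,
      Matrix.mul_assoc (Matrix.diagonal s) N N, hNN]
  · have hdP : Matrix.diagonal d * P = Matrix.diagonal t * N * Matrix.diagonal t := by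
      rw [hP]
      simp only [← Matrix.mul_assoc]
      rw [hdt]
    rw [Matrix.IsSymm, hdP]
    simp [Matrix.transpose_mul, Matrix.diagonal_transpose, hNsym, Matrix.mul_assoc]
end

section
/- Let B be an n×m real matrix and D an m×m diagonal matrix with positive diagonal entries, set Q = B·D⁻¹·Bᵀ, equip ℝᵐ with the inner product ⟨x,y⟩_D = xᵀ·D·y, and let L be any generalized inverse of Q. Let P : ℝᵐ → ℝᵐ be the orthogonal projection of (ℝᵐ, ⟨·,·⟩_D) onto the orthogonal complement of ker(B). Then for all γ₁, γ₂ ∈ ℝᵐ: ⟨γ₁, P(γ₂)⟩_D = (B·γ₁)ᵀ·L·(B·γ₂). In words: the energy pairing of the boundaries ν_i = B·γ_i equals the D-inner product of γ₁ with the projection of γ₂. (Paper: Proposition 6.1.) -/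
open Matrix

lemma inner_eq_dot {k : ℕ} (x y : EuclideanSpace ℝ (Fin k)) :
    (inner ℝ x y : ℝ) = (x : Fin k → ℝ) ⬝ᵥ y := by
  simp [PiLp.inner_apply, RCLike.inner_apply, dotProduct, mul_comm]

lemma mem_range_transpose {n m : ℕ} (B : Matrix (Fin n) (Fin m) ℝ) (v : Fin m → ℝ)
    (h : ∀ y, B.mulVec y = 0 → v ⬝ᵥ y = 0) : ∃ x, Bᵀ.mulVec x = v := by
  let g : EuclideanSpace ℝ (Fin n) →ₗ[ℝ] EuclideanSpace ℝ (Fin m) :=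
    { toFun := fun a => WithLp.toLp 2 (Bᵀ.mulVec a)
      map_add' := fun a b => by simp [Matrix.mulVec_add]
      map_smul' := fun c a => by simp [Matrix.mulVec_smul] }
  let K : Submodule ℝ (EuclideanSpace ℝ (Fin m)) := LinearMap.range g
  have hv : (WithLp.toLp 2 v : EuclideanSpace ℝ (Fin m)) ∈ Kᗮᗮ := by
    intro u hu
    have hBu : B.mulVec u = 0 := by
      have h1 : (inner ℝ (g (WithLp.toLp 2 (B.mulVec u))) u : ℝ) = 0 := hu _ ⟨_, rfl⟩
      rw [inner_eq_dot] at h1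
      have h2 : (B.mulVec u) ⬝ᵥ (B.mulVec u) = 0 := by
        rw [show (g (WithLp.toLp 2 (B.mulVec u)) : Fin m → ℝ) = Bᵀ.mulVec (B.mulVec u) from rfl,
          dotProduct_comm, Matrix.dotProduct_mulVec, Matrix.vecMul_transpose] at h1
        exact h1
      exact dotProduct_self_eq_zero.mp h2
    rw [inner_eq_dot, dotProduct_comm]
    exact h u hBu
  rw [Submodule.orthogonal_orthogonal K] at hv
  obtain ⟨x, hx⟩ := hv
  exact ⟨x.ofLp, congrArg WithLp.ofLp hx⟩

/-- **Proposition 6.1.** Let `Q = B D⁻¹ Bᵀ` with `D` a positive diagonal matrix, let `L` be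
any generalized inverse of `Q`, and let `P` be the orthogonal projection of
`(ℝᵐ, ⟨x,y⟩_D = xᵀ D y)` onto the orthogonal complement of `ker B` (characterized by:
`B (P γ) = B γ`, i.e. `γ - P γ ∈ ker B`, and `P γ` is `D`-orthogonal to `ker B`). Then for
all `γ₁, γ₂ ∈ ℝᵐ` the inner product `⟨γ₁, P γ₂⟩_D` equals the energy pairing
`(B γ₁)ᵀ L (B γ₂)` of the boundaries. -/
theorem energy_pairing_via_projection
    {n m : ℕ} (B : Matrix (Fin n) (Fin m) ℝ) (d : Fin m → ℝ)
    (hd : ∀ i, 0 < d i)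
    (L : Matrix (Fin n) (Fin n) ℝ)
    (hL : (B * (Matrix.diagonal d)⁻¹ * Bᵀ) * L * (B * (Matrix.diagonal d)⁻¹ * Bᵀ)
        = B * (Matrix.diagonal d)⁻¹ * Bᵀ)
    (P : (Fin m → ℝ) → (Fin m → ℝ))
    (hP1 : ∀ γ : Fin m → ℝ, B.mulVec (P γ) = B.mulVec γ)
    (hP2 : ∀ γ y : Fin m → ℝ, B.mulVec y = 0 →
      P γ ⬝ᵥ (Matrix.diagonal d).mulVec y = 0)
    (γ₁ γ₂ : Fin m → ℝ) :
    γ₁ ⬝ᵥ (Matrix.diagonal d).mulVec (P γ₂) = B.mulVec γ₁ ⬝ᵥ L.mulVec (B.mulVec γ₂) := by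
  set D := Matrix.diagonal d with hD
  set Q := B * D⁻¹ * Bᵀ with hQ
  have hdet : IsUnit D.det := by
    rw [hD, Matrix.det_diagonal]
    exact IsUnit.mk0 _ (Finset.prod_ne_zero_iff.mpr fun i _ => (hd i).ne')
  have hDinv : D⁻¹ = Matrix.diagonal (fun i => (d i)⁻¹) := by
    apply Matrix.inv_eq_right_inv
    rw [hD, Matrix.diagonal_mul_diagonal,
      show (fun i => d i * (d i)⁻¹) = fun _ => (1:ℝ) from
        funext fun i => mul_inv_cancel₀ (hd i).ne', Matrix.diagonal_one]
  -- D · Pγ₂ is in the range of Bᵀ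
  obtain ⟨x, hx⟩ := mem_range_transpose B (D.mulVec (P γ₂)) (by
    intro y hy
    have h1 : (D.mulVec (P γ₂)) ⬝ᵥ y = P γ₂ ⬝ᵥ D.mulVec y := by
      rw [dotProduct_comm, Matrix.dotProduct_mulVec,
        show y ᵥ* D = Dᵀ *ᵥ y by rw [← Matrix.vecMul_transpose, Matrix.transpose_transpose],
        show Dᵀ = D by rw [hD, Matrix.diagonal_transpose], dotProduct_comm]
    rw [h1]
    exact hP2 γ₂ y hy)
  have hQx : Q.mulVec x = B.mulVec γ₂ := by
    rw [hQ, ← Matrix.mulVec_mulVec, ← Matrix.mulVec_mulVec, hx, Matrix.mulVec_mulVec, Matrix.mulVec_mulVec,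
      Matrix.mul_assoc, Matrix.nonsing_inv_mul D hdet, Matrix.mul_one, hP1]
  -- set z := L (B γ₂) - x ; it is in ker Q hence in ker Bᵀ
  set z := L.mulVec (B.mulVec γ₂) - x with hz
  have hQz : Q.mulVec z = 0 := by
    have e : Q.mulVec (L.mulVec (B.mulVec γ₂)) = Q.mulVec x := by
      rw [← hQx, Matrix.mulVec_mulVec, Matrix.mulVec_mulVec, hL]
    rw [hz, Matrix.mulVec_sub, e, sub_self]
  have hBz : Bᵀ.mulVec z = 0 := by
    have h0 : z ⬝ᵥ Q.mulVec z = 0 := by rw [hQz, dotProduct_zero]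
    have h1 : z ⬝ᵥ Q.mulVec z
        = (Bᵀ.mulVec z) ⬝ᵥ (Matrix.diagonal (fun i => (d i)⁻¹)).mulVec (Bᵀ.mulVec z) := by
      rw [hQ, ← Matrix.mulVec_mulVec, ← Matrix.mulVec_mulVec, Matrix.dotProduct_mulVec,
        show z ᵥ* B = Bᵀ *ᵥ z by rw [← Matrix.vecMul_transpose, Matrix.transpose_transpose],
        hDinv]
    rw [h0] at h1
    have hsum : ∑ j, ((Bᵀ.mulVec z) j) * ((d j)⁻¹ * (Bᵀ.mulVec z) j) = 0 := by
      have := h1.symm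
      simpa [dotProduct, Matrix.mulVec_diagonal] using this
    have hnn : ∀ j ∈ Finset.univ, 0 ≤ ((Bᵀ.mulVec z) j) * ((d j)⁻¹ * (Bᵀ.mulVec z) j) := by
      intro j _
      have := inv_nonneg.mpr (hd j).le
      nlinarith [sq_nonneg ((Bᵀ.mulVec z) j)]
    have h2 := (Finset.sum_eq_zero_iff_of_nonneg hnn).mp hsum
    ext i
    have h3 := h2 i (Finset.mem_univ i)
    have hdi : (0:ℝ) < (d i)⁻¹ := inv_pos.mpr (hd i)
    have h4 : ((Bᵀ.mulVec z) i) = 0 := by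
      rcases mul_eq_zero.mp h3 with h | h
      · exact h
      · rcases mul_eq_zero.mp h with h' | h'
        · exact absurd h' hdi.ne'
        · exact h'
    simpa using h4
  -- conclude
  have hkey : Bᵀ.mulVec (L.mulVec (B.mulVec γ₂)) = D.mulVec (P γ₂) := by
    have : Bᵀ.mulVec (L.mulVec (B.mulVec γ₂)) - Bᵀ.mulVec x = 0 := by
      rw [← Matrix.mulVec_sub]; exact hBz
    rw [sub_eq_zero] at this
    rw [this, hx]
  rw [← hkey, Matrix.dotProduct_mulVec, Matrix.vecMul_transpose]
end

section
/- Let V be a finite-dimensional real inner product space, let H ⊆ V be a subspace, and let u ∈ V with u ∉ H. Let P and P' denote the orthogonal projections of V onto H^⊥ and onto (H + span{u})^⊥, respectively. Then P(u) ≠ 0, and for all v₁, v₂ ∈ V: ⟨v₁, P'(v₂)⟩ = ⟨v₁, P(v₂)⟩ − ⟨v₁, P(u)⟩·⟨P(u), v₂⟩ / ⟨P(u), P(u)⟩. (Paper: linear-algebra form of Theorem A / Theorem 8.2, Rayleigh's law for energy pairings: contracting the edge segment with 1-chain u changes the energy pairing by the stated rank-one correction.) -/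
open Submodule

/-- **Theorem A / Theorem 8.2 (Rayleigh's law for energy pairings), linear-algebra form.**
Let `V` be a finite-dimensional real inner product space, `H ⊆ V` a subspace, and `u ∉ H`.
Let `P` and `P'` be the orthogonal projections onto `Hᗮ` and `(H + span {u})ᗮ`. Then
`P u ≠ 0`, and for all `v₁, v₂ ∈ V`:
`⟨v₁, P' v₂⟩ = ⟨v₁, P v₂⟩ - ⟨v₁, P u⟩ ⟨P u, v₂⟩ / ⟨P u, P u⟩`. -/
theorem rayleigh_law_energy_pairing
    {V : Type*} [NormedAddCommGroup V] [InnerProductSpace ℝ V] [FiniteDimensional ℝ V]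
    (H : Submodule ℝ V) (u : V) (hu : u ∉ H) :
    ((orthogonalProjection Hᗮ u : V) ≠ 0) ∧
    ∀ v₁ v₂ : V,
      (inner ℝ v₁ ((orthogonalProjection (H ⊔ Submodule.span ℝ {u})ᗮ v₂ : V)) : ℝ) =
      (inner ℝ v₁ ((orthogonalProjection Hᗮ v₂ : V)) : ℝ) -
        (inner ℝ v₁ ((orthogonalProjection Hᗮ u : V)) : ℝ)
          * (inner ℝ ((orthogonalProjection Hᗮ u : V)) v₂ : ℝ)
          / (inner ℝ ((orthogonalProjection Hᗮ u : V)) ((orthogonalProjection Hᗮ u : V)) : ℝ) := by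
  set w : V := (orthogonalProjection Hᗮ u : V) with hw
  have hwmem : w ∈ Hᗮ := (orthogonalProjection Hᗮ u).2
  have huw : u - w ∈ H := by
    have := Submodule.sub_starProjection_mem_orthogonal (K := Hᗮ) u
    rwa [Submodule.orthogonal_orthogonal] at this
  have hwne : w ≠ 0 := by
    intro h
    apply hu
    simpa [h] using huw
  refine ⟨hwne, fun v₁ v₂ => ?_⟩
  set K : Submodule ℝ V := H ⊔ Submodule.span ℝ {u} with hK
  have huK : u ∈ K := Submodule.mem_sup_right (Submodule.mem_span_singleton_self u)
  have hwK : w ∈ K := by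
    have : u - (u - w) ∈ K := sub_mem huK (Submodule.mem_sup_left huw)
    simpa using this
  set c : ℝ := (inner ℝ w v₂ : ℝ) / (inner ℝ w w : ℝ) with hc
  have hww : (inner ℝ w w : ℝ) ≠ 0 := inner_self_ne_zero.mpr hwne
  set p : V := (orthogonalProjection Hᗮ v₂ : V) with hp
  set x : V := p - c • w with hx
  have hPv₂ : p ∈ Hᗮ := (orthogonalProjection Hᗮ v₂).2
  have hv₂sub : v₂ - p ∈ H := by
    have := Submodule.sub_starProjection_mem_orthogonal (K := Hᗮ) v₂
    rwa [Submodule.orthogonal_orthogonal] at this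
  have hkey : (inner ℝ w p : ℝ) = (inner ℝ w v₂ : ℝ) := by
    have h0 : (inner ℝ (v₂ - p) w : ℝ) = 0 := hwmem _ hv₂sub
    rw [inner_sub_left] at h0
    have e1 := real_inner_comm w p
    have e2 := real_inner_comm w v₂
    linarith
  have hxHmem : x ∈ Hᗮ := sub_mem hPv₂ (Submodule.smul_mem _ _ hwmem)
  have hxu : (inner ℝ u x : ℝ) = 0 := by
    have h1 : (inner ℝ (u - w) x : ℝ) = 0 := hxHmem (u - w) huw
    have h2 : (inner ℝ w x : ℝ) = 0 := by
      rw [hx, inner_sub_right, real_inner_smul_right, hkey, hc]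
      field_simp
      simp
    have h3 := inner_sub_left (𝕜 := ℝ) u w x
    rw [h1, h2] at h3
    linarith
  have hxK : x ∈ Kᗮ := by
    rw [hK, ← Submodule.inf_orthogonal]
    exact ⟨hxHmem, Submodule.mem_orthogonal_singleton_iff_inner_right.mpr hxu⟩
  have hsub : v₂ - x ∈ Kᗮᗮ := by
    rw [Submodule.orthogonal_orthogonal]
    have : v₂ - x = (v₂ - p) + c • w := by rw [hx]; abel
    rw [this]
    exact add_mem (Submodule.mem_sup_left hv₂sub) (Submodule.smul_mem _ _ hwK)
  have hproj : (orthogonalProjection Kᗮ v₂ : V) = x :=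
    Submodule.eq_starProjection_of_mem_orthogonal hxK hsub
  rw [hproj, hx, inner_sub_right, real_inner_smul_right, hc]
  ring
end

section
/- Let B be an n×m real matrix and D an m×m diagonal matrix with positive diagonal entries, set Q = B·D⁻¹·Bᵀ, equip ℝᵐ with the inner product ⟨x,y⟩_D = xᵀ·D·y, let L be any generalized inverse of Q, and put Ξ := Bᵀ·L·B. Fix a column index e ∈ {1,…,m} and assume the e-th column of B is nonzero. Then the diagonal entry r := Ξ_{ee} is strictly positive, and the matrix S := D⁻¹·Ξ − (1/r)·D⁻¹·(Ξ·δ_e)·(Ξ·δ_e)ᵀ is the matrix of the orthogonal projection of (ℝᵐ, ⟨·,·⟩_D) onto the orthogonal complement of ker(B) + span{δ_e}: for every x ∈ ℝᵐ, x − S·x ∈ ker(B) + span{δ_e} and S·x is ⟨·,·⟩_D-orthogonal to every vector of ker(B) + span{δ_e}. (Paper: the projection matrix formula (8.3) for π'_{G/e} stated in the Introduction and proved in Theorem 8.2.) -/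
open Matrix

private lemma aux_vec_zero {m : ℕ} {d : Fin m → ℝ} (hd : ∀ i, 0 < d i) {v : Fin m → ℝ}
    (h : ∑ i, v i * (d i)⁻¹ * v i = 0) : v = 0 := by
  have hnn : ∀ j ∈ Finset.univ, (0:ℝ) ≤ v j * (d j)⁻¹ * v j := by
    intro j _
    have h1 : (0:ℝ) < (d j)⁻¹ := inv_pos.mpr (hd j)
    nlinarith [sq_nonneg (v j)]
  funext i
  have h0 := (Finset.sum_eq_zero_iff_of_nonneg hnn).mp h i (Finset.mem_univ i)
  have hdi : (d i)⁻¹ ≠ 0 := (inv_pos.mpr (hd i)).ne'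
  have h3 : v i * v i = 0 := by
    have h4 : v i * (d i)⁻¹ * v i = (v i * v i) * (d i)⁻¹ := by ring
    rw [h4] at h0
    exact (mul_eq_zero.mp h0).resolve_right hdi
  exact mul_self_eq_zero.mp h3

private lemma aux_mat_zero {n m : ℕ} {d : Fin m → ℝ} (hd : ∀ i, 0 < d i)
    {M : Matrix (Fin n) (Fin m) ℝ}
    (h : M * Matrix.diagonal (fun i => (d i)⁻¹) * Mᵀ = 0) : M = 0 := by
  ext i j
  have hrow : (fun k => M i k) = 0 := by
    apply aux_vec_zero hd
    have hii := congrFun (congrFun h i) i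
    simpa [Matrix.mul_apply, Matrix.transpose_apply, Matrix.diagonal_apply, ite_mul, mul_ite,
      zero_mul, mul_zero, Finset.sum_ite_eq, Finset.sum_ite_eq'] using hii
  simpa using congrFun hrow j

private lemma aux_QLB {n m : ℕ} {d : Fin m → ℝ} (hd : ∀ i, 0 < d i)
    (B : Matrix (Fin n) (Fin m) ℝ) (L : Matrix (Fin n) (Fin n) ℝ)
    (hL : (B * Matrix.diagonal (fun i => (d i)⁻¹) * Bᵀ) * L *
        (B * Matrix.diagonal (fun i => (d i)⁻¹) * Bᵀ)
        = B * Matrix.diagonal (fun i => (d i)⁻¹) * Bᵀ) :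
    B * Matrix.diagonal (fun i => (d i)⁻¹) * Bᵀ * L * B = B := by
  set D' := Matrix.diagonal (fun i => (d i)⁻¹) with hD'
  have hLt := congrArg Matrix.transpose hL
  simp only [Matrix.transpose_mul, Matrix.transpose_transpose, hD', Matrix.diagonal_transpose,
    Matrix.mul_assoc] at hLt
  have hLr := hL
  simp only [Matrix.mul_assoc] at hLr
  have key : (B * D' * Bᵀ * L * B - B) * D' * (B * D' * Bᵀ * L * B - B)ᵀ = 0 := by
    simp only [Matrix.sub_mul, Matrix.mul_sub, Matrix.transpose_sub, Matrix.transpose_mul,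
      Matrix.transpose_transpose, hD', Matrix.diagonal_transpose, Matrix.mul_assoc, hLt, hLr]
    abel
  have h0 := aux_mat_zero hd key
  have h1 := sub_eq_zero.mp h0
  exact h1
/-- **The contracted projection matrix formula (8.3).** Let `Q = B D⁻¹ Bᵀ` with `D` a
positive diagonal matrix, `L` any generalized inverse of `Q`, and `Ξ := Bᵀ L B`. Fix a
column index `e` with nonzero `e`-th column of `B`. Then `r := Ξ e e > 0`, and the matrix
`S := D⁻¹ Ξ - (1/r) D⁻¹ (Ξ δ_e)(Ξ δ_e)ᵀ` is the matrix of the orthogonal projection of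
`(ℝᵐ, ⟨x,y⟩_D)` onto the orthogonal complement of `ker B + span {δ_e}`: for every `x`,
`x - S x ∈ ker B + span {δ_e}` and `S x` is `D`-orthogonal to `ker B + span {δ_e}`. -/
theorem contracted_projection_matrix
    {n m : ℕ} (B : Matrix (Fin n) (Fin m) ℝ) (d : Fin m → ℝ)
    (hd : ∀ i, 0 < d i)
    (L : Matrix (Fin n) (Fin n) ℝ)
    (hL : (B * (Matrix.diagonal d)⁻¹ * Bᵀ) * L * (B * (Matrix.diagonal d)⁻¹ * Bᵀ)
        = B * (Matrix.diagonal d)⁻¹ * Bᵀ)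
    (e : Fin m) (he : (fun i => B i e) ≠ 0) :
    let Ξ := Bᵀ * L * B
    let r := Ξ e e
    let S := (Matrix.diagonal d)⁻¹ * Ξ -
      (1 / r) • ((Matrix.diagonal d)⁻¹ *
        Matrix.vecMulVec (Ξ.mulVec (Pi.single e 1)) (Ξ.mulVec (Pi.single e 1)))
    0 < r ∧
    ∀ x : Fin m → ℝ,
      (x - S.mulVec x ∈
        LinearMap.ker B.mulVecLin ⊔ Submodule.span ℝ {Pi.single e (1 : ℝ)}) ∧
      (∀ y ∈ LinearMap.ker B.mulVecLin ⊔ Submodule.span ℝ {Pi.single e (1 : ℝ)},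
        S.mulVec x ⬝ᵥ (Matrix.diagonal d).mulVec y = 0) := by
  have hdne : ∀ i, d i ≠ 0 := fun i => (hd i).ne'
  have hDinv : (Matrix.diagonal d)⁻¹ = Matrix.diagonal (fun i => (d i)⁻¹) := by
    apply Matrix.inv_eq_right_inv
    rw [Matrix.diagonal_mul_diagonal,
      show (fun i => d i * (d i)⁻¹) = fun _ => (1:ℝ) from funext fun i => mul_inv_cancel₀ (hdne i),
      Matrix.diagonal_one]
  rw [hDinv] at hL ⊢
  set D' := Matrix.diagonal (fun i => (d i)⁻¹) with hD'
  intro Ξ r S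
  have hXidef : Ξ = Bᵀ * L * B := rfl
  have hrdef : r = Ξ e e := rfl
  have hSdef : S = D' * Ξ -
      (1 / r) • (D' * Matrix.vecMulVec (Ξ.mulVec (Pi.single e 1)) (Ξ.mulVec (Pi.single e 1))) := rfl
  -- key matrix identities
  have hQLB : B * D' * Bᵀ * L * B = B := aux_QLB hd B L hL
  have hQLtB : B * D' * Bᵀ * Lᵀ * B = B := by
    apply aux_QLB hd B Lᵀ
    have h := congrArg Matrix.transpose hL
    simpa only [Matrix.transpose_mul, Matrix.transpose_transpose, hD',
      Matrix.diagonal_transpose, Matrix.mul_assoc] using h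
  have hBtLQ : Bᵀ * L * (B * D' * Bᵀ) = Bᵀ := by
    have h := congrArg Matrix.transpose hQLtB
    simpa only [Matrix.transpose_mul, Matrix.transpose_transpose, hD',
      Matrix.diagonal_transpose, Matrix.mul_assoc] using h
  have hBtLtQ : Bᵀ * Lᵀ * (B * D' * Bᵀ) = Bᵀ := by
    have h := congrArg Matrix.transpose hQLB
    simpa only [Matrix.transpose_mul, Matrix.transpose_transpose, hD',
      Matrix.diagonal_transpose, Matrix.mul_assoc] using h
  have hsym : Bᵀ * Lᵀ * B = Bᵀ * L * B := by
    calc Bᵀ * Lᵀ * B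
        = Bᵀ * Lᵀ * (B * D' * Bᵀ * L * B) := by rw [hQLB]
      _ = (Bᵀ * Lᵀ * (B * D' * Bᵀ)) * (L * B) := by simp only [Matrix.mul_assoc]
      _ = Bᵀ * (L * B) := by rw [hBtLtQ]
      _ = Bᵀ * L * B := by rw [Matrix.mul_assoc]
  have hXit : Ξᵀ = Ξ := by
    rw [hXidef]
    simp only [Matrix.transpose_mul, Matrix.transpose_transpose, ← Matrix.mul_assoc]
    exact hsym
  have hsymme : ∀ i j, Ξ i j = Ξ j i := by
    intro i j
    have h := congrFun (congrFun hXit j) i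
    rwa [Matrix.transpose_apply] at h
  have hidem : Ξ * (D' * Ξ) = Ξ := by
    rw [hXidef]
    calc Bᵀ * L * B * (D' * (Bᵀ * L * B))
        = (Bᵀ * L * (B * D' * Bᵀ)) * (L * B) := by simp only [Matrix.mul_assoc]
      _ = Bᵀ * (L * B) := by rw [hBtLQ]
      _ = Bᵀ * L * B := by rw [Matrix.mul_assoc]
  have hBP : B * (D' * Ξ) = B := by
    rw [hXidef]
    calc B * (D' * (Bᵀ * L * B)) = B * D' * Bᵀ * L * B := by simp only [Matrix.mul_assoc]
      _ = B := hQLB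
  -- r as a sum of squares
  have hrsum : r = ∑ i, Ξ i e * (d i)⁻¹ * Ξ i e := by
    have h := congrFun (congrFun hidem e) e
    calc r = (Ξ * (D' * Ξ)) e e := h.symm
      _ = ∑ i, Ξ i e * (d i)⁻¹ * Ξ i e := by
          simp only [Matrix.mul_apply, hD', Matrix.diagonal_apply, ite_mul, mul_ite,
            zero_mul, mul_zero, Finset.sum_ite_eq, Finset.mem_univ, if_true]
          exact Finset.sum_congr rfl fun i _ => by rw [hsymme e i]; ring
  have hrpos : 0 < r := by
    have hnn : ∀ i ∈ Finset.univ, (0:ℝ) ≤ Ξ i e * (d i)⁻¹ * Ξ i e := by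
      intro i _
      have h1 : (0:ℝ) < (d i)⁻¹ := inv_pos.mpr (hd i)
      nlinarith [sq_nonneg (Ξ i e)]
    have hge : 0 ≤ r := hrsum ▸ Finset.sum_nonneg hnn
    rcases hge.lt_or_eq with h | h
    · exact h
    · exfalso
      have hv0 : (fun i => Ξ i e) = 0 := aux_vec_zero hd (by rw [← hrsum]; exact h.symm)
      apply he
      have h1 : B.mulVec (Pi.single e 1) = (B * (D' * Ξ)).mulVec (Pi.single e 1) := by rw [hBP]
      have h2 : Ξ.mulVec (Pi.single e 1) = 0 := by
        rw [Matrix.mulVec_single]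
        funext i; simpa using congrFun hv0 i
      rw [← Matrix.mulVec_mulVec, ← Matrix.mulVec_mulVec, h2, Matrix.mulVec_zero,
        Matrix.mulVec_zero] at h1
      rw [Matrix.mulVec_single] at h1
      funext i; simpa using congrFun h1 i
  have hrne : r ≠ 0 := hrpos.ne'
  refine ⟨hrpos, ?_⟩
  -- vector notation
  set δ : Fin m → ℝ := Pi.single e 1 with hδ
  set v : Fin m → ℝ := Ξ.mulVec δ with hv
  have hvi : ∀ i, v i = Ξ i e := by
    intro i; rw [hv, hδ, Matrix.mulVec_single]; simp
  -- S applied to a vector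
  have hvmv : ∀ x : Fin m → ℝ, (Matrix.vecMulVec v v).mulVec x = fun i => v i * (v ⬝ᵥ x) := by
    intro x; funext i
    simp [Matrix.mulVec, Matrix.vecMulVec_apply, dotProduct, Finset.mul_sum, mul_assoc]
  have hSmul : ∀ x : Fin m → ℝ,
      S.mulVec x = fun i => (d i)⁻¹ * ((Ξ.mulVec x) i - (v ⬝ᵥ x) / r * v i) := by
    intro x
    rw [hSdef]
    funext i
    rw [Matrix.sub_mulVec]
    simp only [Matrix.smul_mulVec, ← Matrix.mulVec_mulVec, hvmv, Pi.sub_apply,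
      Pi.smul_apply, smul_eq_mul, hD', Matrix.mulVec_diagonal]
    ring
  -- membership of the "kernel part"
  have hkermem : ∀ u : Fin m → ℝ,
      (u - fun i => (d i)⁻¹ * (Ξ.mulVec u) i) ∈ LinearMap.ker B.mulVecLin := by
    intro u
    rw [LinearMap.mem_ker, Matrix.mulVecLin_apply]
    have hfun : (fun i => (d i)⁻¹ * (Ξ.mulVec u) i) = D'.mulVec (Ξ.mulVec u) := by
      funext i; rw [hD', Matrix.mulVec_diagonal]
    have hBP2 : B * D' * Ξ = B := by rw [Matrix.mul_assoc, hBP]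
    rw [hfun, Matrix.mulVec_sub, Matrix.mulVec_mulVec, Matrix.mulVec_mulVec, hBP2, sub_self]
  have hδmem : δ ∈ LinearMap.ker B.mulVecLin ⊔ Submodule.span ℝ {Pi.single e (1:ℝ)} :=
    Submodule.mem_sup_right (Submodule.mem_span_singleton_self _)
  have humem : (fun i => (d i)⁻¹ * v i) ∈
      LinearMap.ker B.mulVecLin ⊔ Submodule.span ℝ {Pi.single e (1:ℝ)} := by
    have h1 : (δ - fun i => (d i)⁻¹ * v i) ∈ LinearMap.ker B.mulVecLin := hkermem δ
    have h2 := sub_mem hδmem (Submodule.mem_sup_left h1)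
    simpa using h2
  -- dot products with kernel elements vanish
  have hker_dot : ∀ (u k : Fin m → ℝ), B.mulVec k = 0 → (Ξ.mulVec u) ⬝ᵥ k = 0 := by
    intro u k hk
    have hXk : Ξ.mulVec k = 0 := by
      rw [hXidef, ← Matrix.mulVec_mulVec, ← Matrix.mulVec_mulVec, hk, Matrix.mulVec_zero,
        Matrix.mulVec_zero]
    calc Ξ.mulVec u ⬝ᵥ k = k ⬝ᵥ Ξ.mulVec u := dotProduct_comm _ _
      _ = (k ᵥ* Ξ) ⬝ᵥ u := dotProduct_mulVec _ _ _
      _ = (Ξᵀ.mulVec k) ⬝ᵥ u := by rw [Matrix.mulVec_transpose]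
      _ = 0 := by rw [hXit, hXk, zero_dotProduct]
  have hvx : ∀ x : Fin m → ℝ, v ⬝ᵥ x = (Ξ.mulVec x) e := by
    intro x
    simp only [dotProduct, Matrix.mulVec]
    exact Finset.sum_congr rfl fun i _ => by rw [hvi i, hsymme i e]
  intro x
  constructor
  · -- x - S x ∈ ker ⊔ span
    have hdecomp : x - S.mulVec x =
        (x - fun i => (d i)⁻¹ * (Ξ.mulVec x) i) + ((v ⬝ᵥ x) / r) • fun i => (d i)⁻¹ * v i := by
      rw [hSmul x]; funext i
      simp only [Pi.add_apply, Pi.sub_apply, Pi.smul_apply, smul_eq_mul]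
      ring
    rw [hdecomp]
    exact Submodule.add_mem _ (Submodule.mem_sup_left (hkermem x))
      (Submodule.smul_mem _ _ humem)
  · -- orthogonality
    intro y hy
    rw [hSmul x]
    have hdiag : ∀ c : ℝ, (fun i => (d i)⁻¹ * ((Ξ.mulVec x) i - c * v i)) ⬝ᵥ
        (Matrix.diagonal d).mulVec y
        = (Ξ.mulVec x - c • v) ⬝ᵥ y := by
      intro c
      simp only [dotProduct, Matrix.mulVec_diagonal, Pi.sub_apply, Pi.smul_apply, smul_eq_mul]
      refine Finset.sum_congr rfl fun i _ => ?_
      rw [show (d i)⁻¹ * ((Ξ.mulVec x) i - c * v i) * (d i * y i)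
          = (d i)⁻¹ * d i * (((Ξ.mulVec x) i - c * v i) * y i) from by ring,
        inv_mul_cancel₀ (hdne i), one_mul]
    rw [hdiag (v ⬝ᵥ x / r)]
    rcases Submodule.mem_sup.mp hy with ⟨k, hk, c, hc, rfl⟩
    rcases Submodule.mem_span_singleton.mp hc with ⟨a, rfl⟩
    have hkk : B.mulVec k = 0 := hk
    have h1 : Ξ.mulVec x ⬝ᵥ k = 0 := hker_dot x k hkk
    have h2 : v ⬝ᵥ k = 0 := hker_dot δ k hkk
    have h3 : Ξ.mulVec x ⬝ᵥ (a • δ) = a * (Ξ.mulVec x) e := by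
      rw [dotProduct_smul, smul_eq_mul, hδ, dotProduct_single, mul_one]
    have h4 : v ⬝ᵥ (a • δ) = a * r := by
      rw [dotProduct_smul, smul_eq_mul, hδ, dotProduct_single, mul_one, hvi e]
    rw [dotProduct_add, sub_dotProduct, sub_dotProduct, smul_dotProduct, smul_dotProduct,
      h1, h2, h3, h4, hvx x]
    field_simp
    ring_nf
    simp [hrne]
end

section
/- Let B be an n×m real matrix (n ≥ 2) each of whose columns equals δ_u − δ_v for some pair of distinct indices u ≠ v, and assume the kernel of Bᵀ is exactly the span of the all-ones vector 𝟙 ∈ ℝⁿ. Let D be an m×m diagonal matrix with positive diagonal entries and set Q = B·D⁻¹·Bᵀ. Fix a column index e and suppose (after relabeling) the e-th column of B equals d := δ_a − δ_n with a < n. Let C be the (n−1)×n matrix with C·δ_i = δ_i for i < n and C·δ_n = δ_a; let B̂ and D̂ be obtained from B and D by deleting the e-th column (resp. the e-th row and column), and set B' := C·B̂ and Q' := B'·D̂⁻¹·B'ᵀ. Let L be a generalized inverse of Q and L' a generalized inverse of Q'. Then dᵀ·L·d > 0, and for all balanced vectors ν₁, ν₂ ∈ ℝⁿ: (C·ν₁)ᵀ·L'·(C·ν₂)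 = ν₁ᵀ·L·ν₂ − (ν₁ᵀ·L·d)·(dᵀ·L·ν₂)/(dᵀ·L·d). (Paper: Theorem A / Theorem 8.2, Rayleigh's law for energy pairings, in matrix form: the energy pairing on the contracted graph G/e equals the energy pairing on G minus the stated rank-one correction.) -/
open Matrix

private lemma diag_inv' {M : ℕ} (v : Fin M → ℝ) (h : ∀ i, v i ≠ 0) :
    (Matrix.diagonal v)⁻¹ = Matrix.diagonal (fun i => (v i)⁻¹) := by
  apply Matrix.inv_eq_right_inv
  rw [Matrix.diagonal_mul_diagonal]
  have : (fun i => v i * (v i)⁻¹) = fun _ => (1:ℝ) := funext fun i => mul_inv_cancel₀ (h i)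
  rw [this, Matrix.diagonal_one]

private lemma quad_form' {N M : ℕ} (Bm : Matrix (Fin N) (Fin M) ℝ) (w : Fin M → ℝ)
    (x : Fin N → ℝ) :
    x ⬝ᵥ (Bm * Matrix.diagonal w * Bmᵀ).mulVec x
      = ∑ j, w j * (Bmᵀ.mulVec x j)^2 := by
  rw [← Matrix.mulVec_mulVec, ← Matrix.mulVec_mulVec, Matrix.dotProduct_mulVec,
    ← Matrix.mulVec_transpose]
  simp [Matrix.mulVec_diagonal, dotProduct]
  ring_nf
  exact Finset.sum_congr rfl fun j _ => mul_comm _ _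

private lemma surj_balanced' {N : ℕ} (hN : 0 < N) (Q : Matrix (Fin N) (Fin N) ℝ)
    (hbal : ∀ x, ∑ i, Q.mulVec x i = 0)
    (hker : ∀ x, Q.mulVec x = 0 → ∃ c : ℝ, x = fun _ => c)
    (ν : Fin N → ℝ) (hν : ∑ i, ν i = 0) : ∃ x, Q.mulVec x = ν := by
  classical
  let s : (Fin N → ℝ) →ₗ[ℝ] ℝ :=
    { toFun := fun v => ∑ i, v i
      map_add' := by intro u v; simp [Finset.sum_add_distrib]
      map_smul' := by intro c u; simp [Finset.mul_sum] }
  let V := LinearMap.ker s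
  have hmem : ∀ x : V, Q.mulVecLin x.1 ∈ V := fun x => hbal x.1
  let f : V →ₗ[ℝ] V := (Q.mulVecLin.comp V.subtype).codRestrict V hmem
  have hinj : Function.Injective f := by
    rw [← LinearMap.ker_eq_bot, LinearMap.ker_eq_bot']
    intro v hv
    have h0 : Q.mulVec v.1 = 0 := congrArg Subtype.val hv
    obtain ⟨c, hc⟩ := hker v.1 h0
    have hsum : ∑ i, v.1 i = 0 := v.2
    rw [hc] at hsum
    simp at hsum
    have hc0 : c = 0 := by
      rcases hsum with h | h
      · omega
      · exact h
    ext i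
    rw [hc, hc0]; rfl
  obtain ⟨x, hx⟩ := (LinearMap.injective_iff_surjective.mp hinj) ⟨ν, hν⟩
  exact ⟨x.1, congrArg Subtype.val hx⟩

private lemma pairing' {N : ℕ} (Q L : Matrix (Fin N) (Fin N) ℝ) (hQ : Qᵀ = Q)
    (hL : Q * L * Q = Q) (x y : Fin N → ℝ) :
    Q.mulVec x ⬝ᵥ L.mulVec (Q.mulVec y) = x ⬝ᵥ Q.mulVec y := by
  have h1 : Q.mulVec x = Matrix.vecMul x Q := by
    rw [← hQ, Matrix.mulVec_transpose, hQ]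
  rw [Matrix.mulVec_mulVec, h1, ← Matrix.dotProduct_mulVec, Matrix.mulVec_mulVec,
    ← Matrix.mul_assoc, hL]

private lemma dot_comm_sym' {N : ℕ} (Q : Matrix (Fin N) (Fin N) ℝ) (hQ : Qᵀ = Q)
    (x y : Fin N → ℝ) : x ⬝ᵥ Q.mulVec y = Q.mulVec x ⬝ᵥ y := by
  rw [Matrix.dotProduct_mulVec, ← Matrix.mulVec_transpose, hQ]

/-- **Theorem A / Theorem 8.2 (Rayleigh's law for energy pairings), matrix form.**
`B` is the incidence matrix of a connected weighted multigraph on `n + 1 ≥ 2` vertices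
(each column is `δ_u - δ_v` for distinct `u, v`; the kernel of `Bᵀ` is exactly the span of
the all-ones vector), `D = diagonal d` has positive diagonal, and `Q = B D⁻¹ Bᵀ` is the
weighted Laplacian. The `e`-th column of `B` is `d₀ := δ_a - δ_last` with `a < last`.
`C` identifies vertex `last` with `a`; `B' := C ∘ (B with column e deleted)` and
`Q' := B' D̂⁻¹ B'ᵀ` is the Laplacian of the contracted graph. If `L`, `L'` are generalized
inverses of `Q`, `Q'`, then `d₀ᵀ L d₀ > 0`, and for all balanced `ν₁, ν₂`:
`(C ν₁)ᵀ L' (C ν₂) = ν₁ᵀ L ν₂ - (ν₁ᵀ L d₀)(d₀ᵀ L ν₂)/(d₀ᵀ L d₀)`. -/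
theorem rayleigh_law_energy_pairing_matrix_form
    {n m : ℕ} (hn : 1 ≤ n)
    (B : Matrix (Fin (n + 1)) (Fin (m + 1)) ℝ)
    (hcols : ∀ j : Fin (m + 1), ∃ u v : Fin (n + 1), u ≠ v ∧
      (fun i => B i j) = (Pi.single u 1 - Pi.single v 1 : Fin (n + 1) → ℝ))
    (hker : ∀ v : Fin (n + 1) → ℝ, Bᵀ.mulVec v = 0 ↔ ∃ c : ℝ, v = fun _ => c)
    (d : Fin (m + 1) → ℝ) (hd : ∀ i, 0 < d i)
    (e : Fin (m + 1)) (a : Fin n)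
    (he : (fun i => B i e)
      = (Pi.single a.castSucc 1 - Pi.single (Fin.last n) 1 : Fin (n + 1) → ℝ))
    (C : Matrix (Fin n) (Fin (n + 1)) ℝ)
    (hC : ∀ i j, C i j = if j = Fin.last n then (if i = a then (1 : ℝ) else 0)
      else if j = i.castSucc then 1 else 0)
    (L : Matrix (Fin (n + 1)) (Fin (n + 1)) ℝ)
    (hL : (B * (Matrix.diagonal d)⁻¹ * Bᵀ) * L * (B * (Matrix.diagonal d)⁻¹ * Bᵀ)
        = B * (Matrix.diagonal d)⁻¹ * Bᵀ)
    (L' : Matrix (Fin n) (Fin n) ℝ)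
    (hL' : ((C * B.submatrix id e.succAbove) * (Matrix.diagonal (fun i => d (e.succAbove i)))⁻¹
            * (C * B.submatrix id e.succAbove)ᵀ) * L' *
           ((C * B.submatrix id e.succAbove) * (Matrix.diagonal (fun i => d (e.succAbove i)))⁻¹
            * (C * B.submatrix id e.succAbove)ᵀ)
        = (C * B.submatrix id e.succAbove) * (Matrix.diagonal (fun i => d (e.succAbove i)))⁻¹
            * (C * B.submatrix id e.succAbove)ᵀ) :
    let d₀ : Fin (n + 1) → ℝ := Pi.single a.castSucc 1 - Pi.single (Fin.last n) 1
    0 < d₀ ⬝ᵥ L.mulVec d₀ ∧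
    ∀ ν₁ ν₂ : Fin (n + 1) → ℝ, (∑ i, ν₁ i = 0) → (∑ i, ν₂ i = 0) →
      C.mulVec ν₁ ⬝ᵥ L'.mulVec (C.mulVec ν₂) =
        ν₁ ⬝ᵥ L.mulVec ν₂ -
          (ν₁ ⬝ᵥ L.mulVec d₀) * (d₀ ⬝ᵥ L.mulVec ν₂) / (d₀ ⬝ᵥ L.mulVec d₀) := by
  classical
  intro d₀
  have hd₀def : d₀ = (Pi.single a.castSucc 1 - Pi.single (Fin.last n) 1 : Fin (n+1) → ℝ) := rfl
  have hdne : ∀ j, d j ≠ 0 := fun j => (hd j).ne'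
  have hDinv : (Matrix.diagonal d)⁻¹ = Matrix.diagonal (fun j => (d j)⁻¹) :=
    diag_inv' d hdne
  have hD'inv : (Matrix.diagonal (fun i => d (e.succAbove i)))⁻¹
      = Matrix.diagonal (fun i => (d (e.succAbove i))⁻¹) :=
    diag_inv' _ (fun i => hdne _)
  set Bh : Matrix (Fin (n+1)) (Fin m) ℝ := B.submatrix id e.succAbove with hBhdef
  set Q : Matrix (Fin (n+1)) (Fin (n+1)) ℝ := B * (Matrix.diagonal d)⁻¹ * Bᵀ with hQdef
  set B' : Matrix (Fin n) (Fin m) ℝ := C * Bh with hB'def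
  set Q' : Matrix (Fin n) (Fin n) ℝ
    := B' * (Matrix.diagonal (fun i => d (e.succAbove i)))⁻¹ * B'ᵀ with hQ'def
  set Qh : Matrix (Fin (n+1)) (Fin (n+1)) ℝ
    := Bh * (Matrix.diagonal (fun i => d (e.succAbove i)))⁻¹ * Bhᵀ with hQhdef
  -- symmetry
  have hQsym : Qᵀ = Q := by
    rw [hQdef, hDinv]
    simp [Matrix.transpose_mul, Matrix.mul_assoc]
  have hQ'sym : Q'ᵀ = Q' := by
    rw [hQ'def, hD'inv]
    simp [Matrix.transpose_mul, Matrix.mul_assoc]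
  -- column e of B is d₀
  have hBe : ∀ i, B i e = d₀ i := fun i => congrFun he i
  have hlast : a.castSucc ≠ Fin.last n := (Fin.castSucc_lt_last a).ne
  have hd₀app : ∀ i, d₀ i = (if i = a.castSucc then (1:ℝ) else 0)
      - (if i = Fin.last n then 1 else 0) := by
    intro i
    rw [hd₀def]
    simp [Pi.single_apply]
  have hd₀dot : ∀ v : Fin (n+1) → ℝ, d₀ ⬝ᵥ v = v a.castSucc - v (Fin.last n) := by
    intro v
    simp only [dotProduct]
    rw [Finset.sum_congr rfl (fun i _ => by rw [hd₀app i, sub_mul])]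
    rw [Finset.sum_sub_distrib]
    simp [Finset.sum_ite_eq']
  have hd₀sum : ∑ i, d₀ i = 0 := by
    rw [Finset.sum_congr rfl (fun i _ => hd₀app i), Finset.sum_sub_distrib]
    simp [Finset.sum_ite_eq']
  have hd₀ne : d₀ ≠ 0 := by
    intro h
    have := hd₀app a.castSucc
    rw [h] at this
    simp [hlast] at this
  -- (Bᵀ x) e = d₀ ⬝ᵥ x
  have hBte : ∀ x : Fin (n+1) → ℝ, Bᵀ.mulVec x e = d₀ ⬝ᵥ x := by
    intro x
    simp only [Matrix.mulVec, dotProduct, Matrix.transpose_apply]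
    exact Finset.sum_congr rfl fun k _ => by rw [hBe k]
  -- quadratic form
  have hquad : ∀ x : Fin (n+1) → ℝ,
      x ⬝ᵥ Q.mulVec x = ∑ j, (d j)⁻¹ * (Bᵀ.mulVec x j)^2 := by
    intro x
    rw [hQdef, hDinv]
    exact quad_form' B _ x
  -- kernel of Q
  have hkerQ : ∀ x : Fin (n+1) → ℝ, Q.mulVec x = 0 → ∃ c : ℝ, x = fun _ => c := by
    intro x hx
    have h0 : x ⬝ᵥ Q.mulVec x = 0 := by rw [hx]; simp
    rw [hquad] at h0
    have hterm : ∀ j ∈ Finset.univ, (0:ℝ) ≤ (d j)⁻¹ * (Bᵀ.mulVec x j)^2 :=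
      fun j _ => mul_nonneg (inv_nonneg.mpr (hd j).le) (sq_nonneg _)
    have hBt0 : Bᵀ.mulVec x = 0 := by
      funext j
      have := (Finset.sum_eq_zero_iff_of_nonneg hterm).mp h0 j (Finset.mem_univ j)
      have h2 : (Bᵀ.mulVec x j)^2 = 0 := by
        rcases mul_eq_zero.mp this with h | h
        · exact absurd h (inv_ne_zero (hdne j))
        · exact h
      exact pow_eq_zero_iff (by norm_num) |>.mp h2
    exact (hker x).mp hBt0
  -- Q of a constant is 0
  have hQconst : ∀ c : ℝ, Q.mulVec (fun _ => c) = 0 := by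
    intro c
    have hBt0 : Bᵀ.mulVec (fun _ => c) = 0 := (hker _).mpr ⟨c, rfl⟩
    rw [hQdef, ← Matrix.mulVec_mulVec, ← Matrix.mulVec_mulVec, hBt0]
    simp
  -- Q x is balanced
  have hbalQ : ∀ x : Fin (n+1) → ℝ, ∑ i, Q.mulVec x i = 0 := by
    intro x
    have h1 : ∑ i, Q.mulVec x i = (fun _ => (1:ℝ)) ⬝ᵥ Q.mulVec x := by
      simp [dotProduct]
    rw [h1, dot_comm_sym' Q hQsym, hQconst]
    simp
  -- split Q = Qh + rank-one
  have hsplit : ∀ x : Fin (n+1) → ℝ,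
      Q.mulVec x = Qh.mulVec x + ((d e)⁻¹ * (d₀ ⬝ᵥ x)) • d₀ := by
    intro x
    funext i
    have hdiag : (Matrix.diagonal fun j => (d j)⁻¹).mulVec (Bᵀ.mulVec x)
        = fun j => (d j)⁻¹ * (Bᵀ.mulVec x j) :=
      funext fun j => Matrix.mulVec_diagonal _ _ j
    have hy : Q.mulVec x = B.mulVec (fun j => (d j)⁻¹ * (Bᵀ.mulVec x j)) := by
      rw [hQdef, hDinv, ← Matrix.mulVec_mulVec, ← Matrix.mulVec_mulVec, hdiag]
    have hQx : Q.mulVec x i = ∑ j, B i j * ((d j)⁻¹ * (Bᵀ.mulVec x j)) := by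
      rw [hy]; rfl
    have hdiag' : (Matrix.diagonal fun k => (d (e.succAbove k))⁻¹).mulVec (Bhᵀ.mulVec x)
        = fun k => (d (e.succAbove k))⁻¹ * (Bhᵀ.mulVec x k) :=
      funext fun k => Matrix.mulVec_diagonal _ _ k
    have hy' : Qh.mulVec x
        = Bh.mulVec (fun k => (d (e.succAbove k))⁻¹ * (Bhᵀ.mulVec x k)) := by
      rw [hQhdef, hD'inv, ← Matrix.mulVec_mulVec, ← Matrix.mulVec_mulVec, hdiag']
    have hBht : ∀ k, Bhᵀ.mulVec x k = Bᵀ.mulVec x (e.succAbove k) := fun k => rfl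
    have hQhx : Qh.mulVec x i
        = ∑ k : Fin m, B i (e.succAbove k) * ((d (e.succAbove k))⁻¹
            * (Bᵀ.mulVec x (e.succAbove k))) := by
      rw [hy']
      show ∑ k, Bh i k * ((d (e.succAbove k))⁻¹ * (Bhᵀ.mulVec x k)) = _
      exact Finset.sum_congr rfl fun k _ => by rw [hBht k]; rfl
    show Q.mulVec x i = Qh.mulVec x i + ((d e)⁻¹ * (d₀ ⬝ᵥ x)) * d₀ i
    rw [hQx, Fin.sum_univ_succAbove _ e, hQhx, hBe i, hBte x]
    ring
  -- C applied to d₀ is 0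
  have hCmul : ∀ (v : Fin (n+1) → ℝ) (i : Fin n),
      C.mulVec v i = v i.castSucc + (if i = a then v (Fin.last n) else 0) := by
    intro v i
    simp only [Matrix.mulVec, dotProduct]
    rw [Fin.sum_univ_castSucc]
    have h1 : ∀ j : Fin n, C i j.castSucc * v j.castSucc
        = (if j = i then (1:ℝ) else 0) * v j.castSucc := by
      intro j
      rw [hC]
      simp [(Fin.castSucc_lt_last j).ne, Fin.castSucc_inj]
    rw [Finset.sum_congr rfl (fun j _ => h1 j), hC]
    simp [Finset.sum_ite_eq']
  have hCd₀ : C.mulVec d₀ = 0 := by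
    funext i
    rw [hCmul]
    rw [hd₀app, hd₀app]
    by_cases h : i = a <;>
      simp [h, hlast, Ne.symm hlast, Fin.castSucc_inj, (Fin.castSucc_lt_last i).ne]
  -- Cᵀ action
  have hCt : ∀ (w : Fin n → ℝ) (u : Fin (n+1) → ℝ),
      (∀ i : Fin n, u i.castSucc = w i) → u (Fin.last n) = w a →
      Cᵀ.mulVec w = u := by
    intro w u h1 h2
    funext j
    simp only [Matrix.mulVec, dotProduct, Matrix.transpose_apply]
    induction j using Fin.lastCases with
    | last =>
      have : ∀ i : Fin n, C i (Fin.last n) * w i = (if i = a then (1:ℝ) else 0) * w i := by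
        intro i; rw [hC]; simp
      rw [Finset.sum_congr rfl (fun i _ => this i)]
      simp [Finset.sum_ite_eq', h2]
    | cast i =>
      have : ∀ i' : Fin n, C i' i.castSucc * w i' = (if i' = i then (1:ℝ) else 0) * w i' := by
        intro i'; rw [hC]
        simp [(Fin.castSucc_lt_last i).ne, Fin.castSucc_inj, eq_comm]
      rw [Finset.sum_congr rfl (fun i' _ => this i')]
      simp [Finset.sum_ite_eq', h1 i]
  -- Q' w = C (Qh (Cᵀ w))
  have hQ'fact : ∀ w : Fin n → ℝ,
      Q'.mulVec w = C.mulVec (Qh.mulVec (Cᵀ.mulVec w)) := by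
    intro w
    have : Q' = C * Qh * Cᵀ := by
      rw [hQ'def, hQhdef, hB'def, Matrix.transpose_mul]
      simp only [Matrix.mul_assoc]
    rw [this, ← Matrix.mulVec_mulVec, ← Matrix.mulVec_mulVec]
  -- w ⬝ᵥ C y = Cᵀ w ⬝ᵥ y
  have hdotC : ∀ (w : Fin n → ℝ) (y : Fin (n+1) → ℝ),
      w ⬝ᵥ C.mulVec y = Cᵀ.mulVec w ⬝ᵥ y := by
    intro w y
    rw [Matrix.dotProduct_mulVec, ← Matrix.mulVec_transpose]
  -- get z with Q z = d₀
  obtain ⟨z, hz⟩ := surj_balanced' (Nat.succ_pos n) Q hbalQ hkerQ d₀ hd₀sum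
  set r : ℝ := d₀ ⬝ᵥ z with hrdef
  have hLd₀ : d₀ ⬝ᵥ L.mulVec d₀ = r := by
    rw [← hz, pairing' Q L hQsym hL, hz, hrdef, dotProduct_comm]
  have hrpos : 0 < r := by
    have h1 : r = z ⬝ᵥ Q.mulVec z := by rw [hz, hrdef, dotProduct_comm]
    have h2 : 0 ≤ r := by
      rw [h1, hquad]
      exact Finset.sum_nonneg fun j _ =>
        mul_nonneg (inv_nonneg.mpr (hd j).le) (sq_nonneg _)
    rcases h2.lt_or_eq with h | h
    · exact h
    · exfalso
      have h0 : z ⬝ᵥ Q.mulVec z = 0 := by rw [← h1, ← h]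
      rw [hquad] at h0
      have hterm : ∀ j ∈ Finset.univ, (0:ℝ) ≤ (d j)⁻¹ * (Bᵀ.mulVec z j)^2 :=
        fun j _ => mul_nonneg (inv_nonneg.mpr (hd j).le) (sq_nonneg _)
      have hBt0 : Bᵀ.mulVec z = 0 := by
        funext j
        have := (Finset.sum_eq_zero_iff_of_nonneg hterm).mp h0 j (Finset.mem_univ j)
        have h2' : (Bᵀ.mulVec z j)^2 = 0 := by
          rcases mul_eq_zero.mp this with h' | h'
          · exact absurd h' (inv_ne_zero (hdne j))
          · exact h'
        exact pow_eq_zero_iff (by norm_num) |>.mp h2'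
      obtain ⟨c, hc⟩ := (hker z).mp hBt0
      have : Q.mulVec z = 0 := by rw [hc]; exact hQconst c
      rw [hz] at this
      exact hd₀ne this
  constructor
  · rw [hLd₀]; exact hrpos
  · intro ν₁ ν₂ hν₁ hν₂
    obtain ⟨x₁, hx₁⟩ := surj_balanced' (Nat.succ_pos n) Q hbalQ hkerQ ν₁ hν₁
    obtain ⟨x₂, hx₂⟩ := surj_balanced' (Nat.succ_pos n) Q hbalQ hkerQ ν₂ hν₂
    set p₁ : ℝ := d₀ ⬝ᵥ x₁ with hp₁
    set p₂ : ℝ := d₀ ⬝ᵥ x₂ with hp₂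
    set u₁ : Fin (n+1) → ℝ := x₁ - (p₁ / r) • z with hu₁
    set u₂ : Fin (n+1) → ℝ := x₂ - (p₂ / r) • z with hu₂
    have hd₀u : ∀ (x : Fin (n+1) → ℝ) (p : ℝ), p = d₀ ⬝ᵥ x →
        d₀ ⬝ᵥ (x - (p / r) • z) = 0 := by
      intro x p hp
      rw [dotProduct_sub, dotProduct_smul, smul_eq_mul, ← hrdef, ← hp]
      field_simp
      ring
    have hd₀u₁ : d₀ ⬝ᵥ u₁ = 0 := hd₀u x₁ p₁ hp₁
    have hd₀u₂ : d₀ ⬝ᵥ u₂ = 0 := hd₀u x₂ p₂ hp₂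
    set w₁ : Fin n → ℝ := fun i => u₁ i.castSucc with hw₁
    set w₂ : Fin n → ℝ := fun i => u₂ i.castSucc with hw₂
    have hCtw : ∀ (u : Fin (n+1) → ℝ), d₀ ⬝ᵥ u = 0 →
        Cᵀ.mulVec (fun i => u i.castSucc) = u := by
      intro u hu
      apply hCt
      · intro i; rfl
      · rw [hd₀dot] at hu
        linarith
    have hQu : ∀ (x ν : Fin (n+1) → ℝ) (p : ℝ), Q.mulVec x = ν →
        Q.mulVec (x - (p / r) • z) = ν - (p / r) • d₀ := by
      intro x ν p hx
      rw [Matrix.mulVec_sub, Matrix.mulVec_smul, hx, hz]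
    have hQu₁ : Q.mulVec u₁ = ν₁ - (p₁ / r) • d₀ := hQu x₁ ν₁ p₁ hx₁
    have hQu₂ : Q.mulVec u₂ = ν₂ - (p₂ / r) • d₀ := hQu x₂ ν₂ p₂ hx₂
    have hQhu : ∀ u : Fin (n+1) → ℝ, d₀ ⬝ᵥ u = 0 → Qh.mulVec u = Q.mulVec u := by
      intro u hu
      rw [hsplit u, hu]
      simp
    have hQ'w : ∀ (w : Fin n → ℝ) (u ν : Fin (n+1) → ℝ) (p : ℝ),
        w = (fun i => u i.castSucc) → d₀ ⬝ᵥ u = 0 →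
        Q.mulVec u = ν - (p / r) • d₀ →
        Q'.mulVec w = C.mulVec ν := by
      intro w u ν p hwdef hu hQuv
      rw [hQ'fact, hwdef, hCtw u hu, hQhu u hu, hQuv, Matrix.mulVec_sub,
        Matrix.mulVec_smul, hCd₀]
      simp
    have hQ'w₁ : Q'.mulVec w₁ = C.mulVec ν₁ := hQ'w w₁ u₁ ν₁ p₁ hw₁ hd₀u₁ hQu₁
    have hQ'w₂ : Q'.mulVec w₂ = C.mulVec ν₂ := hQ'w w₂ u₂ ν₂ p₂ hw₂ hd₀u₂ hQu₂
    -- LHS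
    have hLHS : C.mulVec ν₁ ⬝ᵥ L'.mulVec (C.mulVec ν₂)
        = u₁ ⬝ᵥ (ν₂ - (p₂ / r) • d₀) := by
      rw [← hQ'w₁, ← hQ'w₂, pairing' Q' L' hQ'sym hL', hQ'fact, hdotC, hw₁,
        hCtw u₁ hd₀u₁, hw₂, hCtw u₂ hd₀u₂, hQhu u₂ hd₀u₂, hQu₂]
    -- dot product facts
    have hzν₂ : z ⬝ᵥ ν₂ = p₂ := by
      rw [← hx₂, dot_comm_sym' Q hQsym, hz, hp₂]
    have hx₁d₀ : x₁ ⬝ᵥ d₀ = p₁ := by rw [hp₁, dotProduct_comm]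
    have hzd₀ : z ⬝ᵥ d₀ = r := by rw [hrdef, dotProduct_comm]
    have hLHS2 : C.mulVec ν₁ ⬝ᵥ L'.mulVec (C.mulVec ν₂)
        = x₁ ⬝ᵥ ν₂ - p₁ * p₂ / r := by
      rw [hLHS, hu₁]
      simp only [sub_dotProduct, dotProduct_sub, smul_dotProduct, dotProduct_smul,
        smul_eq_mul, hzν₂, hx₁d₀, hzd₀]
      field_simp
      try ring
    -- RHS
    have hR1 : ν₁ ⬝ᵥ L.mulVec ν₂ = x₁ ⬝ᵥ ν₂ := by
      rw [← hx₁, ← hx₂, pairing' Q L hQsym hL, hx₂]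
    have hR2 : ν₁ ⬝ᵥ L.mulVec d₀ = p₁ := by
      rw [← hx₁, ← hz, pairing' Q L hQsym hL, hz, hx₁d₀]
    have hR3 : d₀ ⬝ᵥ L.mulVec ν₂ = p₂ := by
      rw [← hz, ← hx₂, pairing' Q L hQsym hL, hx₂, hzν₂]
    rw [hLHS2, hR1, hR2, hR3, hLd₀]
end

section
/- Let B be an n×m real matrix (n ≥ 2) each of whose columns equals δ_u − δ_v for some pair of distinct indices u ≠ v, and assume the kernel of Bᵀ is exactly the span of the all-ones vector 𝟙 ∈ ℝⁿ. Let D be an m×m diagonal matrix with positive diagonal entries and set Q = B·D⁻¹·Bᵀ. Fix a column index e and suppose (after relabeling) the e-th column of B equals d := δ_a − δ_n with a < n. Let C be the (n−1)×n matrix with C·δ_i = δ_i for i < n and C·δ_n = δ_a; let B̂ and D̂ be obtained from B and D by deleting the e-th column (resp. the e-th row and column), and set B' := C·B̂ and Q' := B'·D̂⁻¹·B'ᵀ. Let L be a generalized inverse of Q and L' a generalized inverse of Q'. Then for all indices x, y ∈ {1,…,n}, writing r_G(x,y) := (δ_x − δ_y)ᵀ·L·(δ_x − δ_y), ξ :=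 (δ_x − δ_y)ᵀ·L·d, and r_{G/e}(x,y) := (C·δ_x − C·δ_y)ᵀ·L'·(C·δ_x − C·δ_y), one has r_{G/e}(x,y) = r_G(x,y) − ξ²/(dᵀ·L·d); in particular r_{G/e}(x,y) ≤ r_G(x,y). (Paper: Corollary C / Corollary 8.5, the quantitative Rayleigh monotonicity law for effective resistances under edge contraction.) -/
open Matrix

private lemma diag_inv_eq {J : Type*} [Fintype J] [DecidableEq J] (d : J → ℝ)
    (hd : ∀ j, d j ≠ 0) :
    (Matrix.diagonal d)⁻¹ = Matrix.diagonal (fun j => (d j)⁻¹) := by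
  apply Matrix.inv_eq_right_inv
  rw [Matrix.diagonal_mul_diagonal]
  have : (fun j => d j * (d j)⁻¹) = fun _ => (1 : ℝ) :=
    funext fun j => mul_inv_cancel₀ (hd j)
  rw [this, Matrix.diagonal_one]

private lemma quad_form {I J : Type*} [Fintype I] [Fintype J] [DecidableEq J]
    (B : Matrix I J ℝ) (d : J → ℝ) (hd : ∀ j, d j ≠ 0) (q : I → ℝ) :
    q ⬝ᵥ (B * (Matrix.diagonal d)⁻¹ * Bᵀ).mulVec q
      = ∑ j, (d j)⁻¹ * (Bᵀ.mulVec q j) ^ 2 := by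
  rw [diag_inv_eq d hd, Matrix.mul_assoc, ← Matrix.mulVec_mulVec, Matrix.dotProduct_mulVec,
    ← Matrix.mulVec_transpose, ← Matrix.mulVec_mulVec]
  simp only [dotProduct, Matrix.mulVec_diagonal]
  exact Finset.sum_congr rfl fun j _ => by ring

private lemma range_Q {n m : ℕ} (B : Matrix (Fin (n + 1)) (Fin m) ℝ)
    (hker : ∀ v : Fin (n + 1) → ℝ, Bᵀ.mulVec v = 0 ↔ ∃ c : ℝ, v = fun _ => c)
    (d : Fin m → ℝ) (hd : ∀ i, 0 < d i)
    (u : Fin (n + 1) → ℝ) (hu : ∑ i, u i = 0) :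
    ∃ q, (B * (Matrix.diagonal d)⁻¹ * Bᵀ).mulVec q = u := by
  classical
  set Q := B * (Matrix.diagonal d)⁻¹ * Bᵀ with hQ
  have hd' : ∀ j, d j ≠ 0 := fun j => (hd j).ne'
  have hQsym : Qᵀ = Q := by
    rw [hQ, diag_inv_eq d hd']
    simp [Matrix.transpose_mul, Matrix.diagonal_transpose, Matrix.mul_assoc]
  have hB1 : Bᵀ.mulVec (fun _ => 1) = 0 := (hker _).mpr ⟨1, rfl⟩
  have hQ1 : Q.mulVec (fun _ => 1) = 0 := by
    rw [hQ, Matrix.mul_assoc, ← Matrix.mulVec_mulVec, ← Matrix.mulVec_mulVec, hB1]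
    simp
  have hker' : LinearMap.ker Q.mulVecLin
      = Submodule.span ℝ {(fun _ => 1 : Fin (n + 1) → ℝ)} := by
    apply le_antisymm
    · intro q hq
      have hq0 : Q.mulVec q = 0 := hq
      have h2 : ∑ j, (d j)⁻¹ * (Bᵀ.mulVec q j) ^ 2 = 0 := by
        rw [← quad_form B d hd' q, ← hQ, hq0]
        simp
      have h3 : Bᵀ.mulVec q = 0 := by
        funext j
        have hterm := (Finset.sum_eq_zero_iff_of_nonneg
          (fun j _ => mul_nonneg (inv_nonneg.mpr (hd j).le) (sq_nonneg _))).mp h2 j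
          (Finset.mem_univ j)
        have h4 : (Bᵀ.mulVec q j) ^ 2 = 0 := by
          rcases mul_eq_zero.mp hterm with h | h
          · exact absurd h (inv_ne_zero (hd' j))
          · exact h
        exact pow_eq_zero_iff two_ne_zero |>.mp h4
      obtain ⟨c, hc⟩ := (hker q).mp h3
      rw [hc]
      exact Submodule.mem_span_singleton.mpr ⟨c, by funext i; simp⟩
    · rw [Submodule.span_singleton_le_iff_mem]
      exact hQ1
  have hfull : Module.finrank ℝ (Fin (n + 1) → ℝ) = n + 1 := by
    simp [Module.finrank_fin_fun]
  have hker1 : Module.finrank ℝ (LinearMap.ker Q.mulVecLin) = 1 := by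
    rw [hker']
    refine finrank_span_singleton ?_
    intro h
    have := congrFun h 0
    simp at this
  have hrange : Module.finrank ℝ (LinearMap.range Q.mulVecLin) = n := by
    have h1 := LinearMap.finrank_range_add_finrank_ker Q.mulVecLin
    rw [hker1, hfull] at h1
    omega
  let g : (Fin (n + 1) → ℝ) →ₗ[ℝ] ℝ := ∑ i, LinearMap.proj i
  have hg : ∀ v : Fin (n + 1) → ℝ, g v = ∑ i, v i := by
    intro v
    simp [g]
  have hle : LinearMap.range Q.mulVecLin ≤ LinearMap.ker g := by
    rintro _ ⟨q, rfl⟩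
    rw [LinearMap.mem_ker, hg, Matrix.mulVecLin_apply]
    have h5 : ∑ i, Q.mulVec q i = (fun _ => (1 : ℝ)) ⬝ᵥ Q.mulVec q := by
      simp [dotProduct]
    rw [h5, Matrix.dotProduct_mulVec, ← Matrix.mulVec_transpose, hQsym, hQ1]
    simp
  have hgker : Module.finrank ℝ (LinearMap.ker g) = n := by
    have h1 := LinearMap.finrank_range_add_finrank_ker g
    have hsurj : LinearMap.range g = ⊤ := by
      rw [LinearMap.range_eq_top]
      intro r
      refine ⟨fun _ => r / (n + 1), ?_⟩
      rw [hg, Finset.sum_const, Finset.card_univ, Fintype.card_fin, nsmul_eq_mul]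
      have hne : ((n : ℝ) + 1) ≠ 0 := by positivity
      push_cast
      field_simp
    rw [hsurj, hfull, finrank_top] at h1
    simp [Module.finrank_self] at h1
    omega
  have heq : LinearMap.range Q.mulVecLin = LinearMap.ker g :=
    Submodule.eq_of_le_of_finrank_le hle (by rw [hgker, hrange])
  have hmem : u ∈ LinearMap.range Q.mulVecLin := by
    rw [heq, LinearMap.mem_ker, hg]
    exact hu
  obtain ⟨q, hq⟩ := hmem
  exact ⟨q, hq⟩

private lemma vec_zero_of_sum {J : Type*} [Fintype J] (d : J → ℝ) (hd : ∀ j, 0 < d j)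
    (y : J → ℝ) (h : ∑ j, (d j)⁻¹ * (y j) ^ 2 = 0) : y = 0 := by
  funext j
  have hterm := (Finset.sum_eq_zero_iff_of_nonneg
    (fun j _ => mul_nonneg (inv_nonneg.mpr (hd j).le) (sq_nonneg _))).mp h j (Finset.mem_univ j)
  have h4 : (y j) ^ 2 = 0 := by
    rcases mul_eq_zero.mp hterm with h | h
    · exact absurd h (inv_ne_zero (hd j).ne')
    · exact h
  exact pow_eq_zero_iff two_ne_zero |>.mp h4

private lemma gen_inv_bilin {I : Type*} [Fintype I] (Q L : Matrix I I ℝ)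
    (hsym : Qᵀ = Q) (hL : Q * L * Q = Q) (q1 q2 : I → ℝ) :
    (Q.mulVec q1) ⬝ᵥ L.mulVec (Q.mulVec q2) = q1 ⬝ᵥ Q.mulVec q2 := by
  calc (Q.mulVec q1) ⬝ᵥ L.mulVec (Q.mulVec q2)
      = ((L.mulVec (Q.mulVec q2)) ᵥ* Q) ⬝ᵥ q1 := by
        rw [dotProduct_comm, Matrix.dotProduct_mulVec]
    _ = (Qᵀ.mulVec (L.mulVec (Q.mulVec q2))) ⬝ᵥ q1 := by rw [Matrix.mulVec_transpose]
    _ = (Q.mulVec (L.mulVec (Q.mulVec q2))) ⬝ᵥ q1 := by rw [hsym]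
    _ = (((Q * L) * Q).mulVec q2) ⬝ᵥ q1 := by rw [Matrix.mulVec_mulVec, Matrix.mulVec_mulVec]
    _ = (Q.mulVec q2) ⬝ᵥ q1 := by rw [hL]
    _ = q1 ⬝ᵥ Q.mulVec q2 := dotProduct_comm _ _


/-- **Corollary C / Corollary 8.5 (quantitative Rayleigh monotonicity law), matrix form.**
`B` is the incidence matrix of a connected weighted multigraph on `n + 1 ≥ 2` vertices
(each column is `δ_u - δ_v` for distinct `u, v`; the kernel of `Bᵀ` is exactly the span of
the all-ones vector), `D = diagonal d` has positive diagonal, and `Q = B D⁻¹ Bᵀ` is the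
weighted Laplacian. The `e`-th column of `B` is `d₀ := δ_a - δ_last` with `a < last`.
`C` identifies vertex `last` with `a`; `B' := C ∘ (B with column e deleted)` and
`Q' := B' D̂⁻¹ B'ᵀ` is the Laplacian of the contracted graph `G/e`. If `L`, `L'` are
generalized inverses of `Q`, `Q'`, then for all vertices `x, y`:
`r_{G/e}(x,y) = r_G(x,y) - ξ² / (d₀ᵀ L d₀)` where `r_G(x,y) = (δ_x - δ_y)ᵀ L (δ_x - δ_y)`,
`ξ = (δ_x - δ_y)ᵀ L d₀`, and `r_{G/e}(x,y) = (C δ_x - C δ_y)ᵀ L' (C δ_x - C δ_y)`;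
in particular `r_{G/e}(x,y) ≤ r_G(x,y)`. -/
theorem rayleigh_monotonicity_effective_resistance_matrix_form
    {n m : ℕ} (hn : 1 ≤ n)
    (B : Matrix (Fin (n + 1)) (Fin (m + 1)) ℝ)
    (hcols : ∀ j : Fin (m + 1), ∃ u v : Fin (n + 1), u ≠ v ∧
      (fun i => B i j) = (Pi.single u 1 - Pi.single v 1 : Fin (n + 1) → ℝ))
    (hker : ∀ v : Fin (n + 1) → ℝ, Bᵀ.mulVec v = 0 ↔ ∃ c : ℝ, v = fun _ => c)
    (d : Fin (m + 1) → ℝ) (hd : ∀ i, 0 < d i)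
    (e : Fin (m + 1)) (a : Fin n)
    (he : (fun i => B i e)
      = (Pi.single a.castSucc 1 - Pi.single (Fin.last n) 1 : Fin (n + 1) → ℝ))
    (C : Matrix (Fin n) (Fin (n + 1)) ℝ)
    (hC : ∀ i j, C i j = if j = Fin.last n then (if i = a then (1 : ℝ) else 0)
      else if j = i.castSucc then 1 else 0)
    (L : Matrix (Fin (n + 1)) (Fin (n + 1)) ℝ)
    (hL : (B * (Matrix.diagonal d)⁻¹ * Bᵀ) * L * (B * (Matrix.diagonal d)⁻¹ * Bᵀ)
        = B * (Matrix.diagonal d)⁻¹ * Bᵀ)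
    (L' : Matrix (Fin n) (Fin n) ℝ)
    (hL' : ((C * B.submatrix id e.succAbove) * (Matrix.diagonal (fun i => d (e.succAbove i)))⁻¹
            * (C * B.submatrix id e.succAbove)ᵀ) * L' *
           ((C * B.submatrix id e.succAbove) * (Matrix.diagonal (fun i => d (e.succAbove i)))⁻¹
            * (C * B.submatrix id e.succAbove)ᵀ)
        = (C * B.submatrix id e.succAbove) * (Matrix.diagonal (fun i => d (e.succAbove i)))⁻¹
            * (C * B.submatrix id e.succAbove)ᵀ) :
    let d₀ : Fin (n + 1) → ℝ := Pi.single a.castSucc 1 - Pi.single (Fin.last n) 1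
    ∀ x y : Fin (n + 1),
      (C.mulVec (Pi.single x 1) - C.mulVec (Pi.single y 1)) ⬝ᵥ
          L'.mulVec (C.mulVec (Pi.single x 1) - C.mulVec (Pi.single y 1)) =
        (Pi.single x 1 - Pi.single y 1) ⬝ᵥ L.mulVec (Pi.single x 1 - Pi.single y 1) -
          ((Pi.single x 1 - Pi.single y 1) ⬝ᵥ L.mulVec d₀) ^ 2 / (d₀ ⬝ᵥ L.mulVec d₀) ∧
      (C.mulVec (Pi.single x 1) - C.mulVec (Pi.single y 1)) ⬝ᵥ
          L'.mulVec (C.mulVec (Pi.single x 1) - C.mulVec (Pi.single y 1)) ≤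
        (Pi.single x 1 - Pi.single y 1) ⬝ᵥ L.mulVec (Pi.single x 1 - Pi.single y 1) := by
  intro d₀ x y
  classical
  have hd' : ∀ j, d j ≠ 0 := fun j => (hd j).ne'
  have hd₀ : d₀ = Pi.single a.castSucc 1 - Pi.single (Fin.last n) 1 := rfl
  set Bh := B.submatrix id e.succAbove with hBh
  set dh : Fin m → ℝ := fun i => d (e.succAbove i) with hdh
  set B' := C * Bh with hB'
  set Q := B * (Matrix.diagonal d)⁻¹ * Bᵀ with hQdef
  set Q' := B' * (Matrix.diagonal dh)⁻¹ * B'ᵀ with hQ'def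
  set v : Fin (n + 1) → ℝ := Pi.single x 1 - Pi.single y 1 with hv
  set re := d₀ ⬝ᵥ L.mulVec d₀ with hre_def
  set ξ := v ⬝ᵥ L.mulVec d₀ with hξ_def
  set r := v ⬝ᵥ L.mulVec v with hr_def
  -- basic facts
  have hQsym : Qᵀ = Q := by
    rw [hQdef, diag_inv_eq d hd']
    simp [Matrix.transpose_mul, Matrix.diagonal_transpose, Matrix.mul_assoc]
  have hne : a.castSucc ≠ Fin.last n := Fin.ne_of_lt (Fin.castSucc_lt_last a)
  have hd₀a : d₀ a.castSucc = 1 := by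
    rw [hd₀]
    simp [Pi.single_apply, hne]
  have hd₀sum : ∑ i, d₀ i = 0 := by
    rw [hd₀]
    simp [Pi.sub_apply, Finset.sum_sub_distrib, Finset.sum_pi_single']
  have hvsum : ∑ i, v i = 0 := by
    rw [hv]
    simp [Pi.sub_apply, Finset.sum_sub_distrib, Finset.sum_pi_single']
  obtain ⟨qd, hqd⟩ := range_Q B hker d hd d₀ hd₀sum
  obtain ⟨qv, hqv⟩ := range_Q B hker d hd v hvsum
  rw [← hQdef] at hqd hqv
  have hbil := gen_inv_bilin Q L hQsym hL
  have hdot : ∀ q1 q2, q1 ⬝ᵥ Q.mulVec q2 = q2 ⬝ᵥ Q.mulVec q1 := by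
    intro q1 q2
    rw [Matrix.dotProduct_mulVec, ← Matrix.mulVec_transpose, hQsym, dotProduct_comm]
  have hQL : ∀ q : Fin (n + 1) → ℝ, Q.mulVec (L.mulVec (Q.mulVec q)) = Q.mulVec q := by
    intro q
    rw [Matrix.mulVec_mulVec, Matrix.mulVec_mulVec, hL]
  -- positivity of re
  have hre_pos : 0 < re := by
    have h := hbil qd qd
    rw [hqd] at h
    have hq := quad_form B d hd' qd
    rw [← hQdef] at hq
    have hre2 : re = ∑ j, (d j)⁻¹ * (Bᵀ.mulVec qd j) ^ 2 := by
      rw [hre_def, h, ← hqd, hq]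
    have hnn : 0 ≤ re := hre2 ▸ Finset.sum_nonneg
      (fun j _ => mul_nonneg (inv_nonneg.mpr (hd j).le) (sq_nonneg _))
    rcases hnn.lt_or_eq with hlt | heq0
    · exact hlt
    · exfalso
      have hall : Bᵀ.mulVec qd = 0 :=
        vec_zero_of_sum d hd _ (by rw [← hre2, ← heq0])
      have hz : Q.mulVec qd = 0 := by
        rw [hQdef, Matrix.mul_assoc, ← Matrix.mulVec_mulVec, ← Matrix.mulVec_mulVec, hall]
        simp
      rw [hqd] at hz
      have h1 := congrFun hz a.castSucc
      rw [hd₀a] at h1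
      simpa using h1
  -- symmetry of the cross term
  have hξ' : d₀ ⬝ᵥ L.mulVec v = ξ := by
    have h1 := hbil qd qv
    have h2 := hbil qv qd
    rw [hqd, hqv] at h1 h2
    rw [h1, ← hqv, hdot qd qv, hqd, ← h2, ← hξ_def]
  -- the auxiliary vector u and potential p
  set cξ := ξ / re with hc_def
  set u := v - cξ • d₀ with hu_def
  have hQu : Q.mulVec (qv - cξ • qd) = u := by
    rw [Matrix.mulVec_sub, Matrix.mulVec_smul, hqv, hqd, hu_def]
  set p := L.mulVec u with hp_def
  have hQp : Q.mulVec p = u := by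
    have h := hQL (qv - cξ • qd)
    rw [hQu] at h
    rw [hp_def]
    exact h
  have hu_expand : u ⬝ᵥ L.mulVec u = r - ξ ^ 2 / re := by
    rw [hu_def, Matrix.mulVec_sub, Matrix.mulVec_smul]
    simp only [sub_dotProduct, dotProduct_sub, smul_dotProduct, dotProduct_smul, smul_eq_mul]
    rw [hξ', ← hr_def, ← hξ_def, ← hre_def, hc_def]
    field_simp
    ring
  have hd₀p : d₀ ⬝ᵥ p = 0 := by
    rw [hp_def, hu_def, Matrix.mulVec_sub, Matrix.mulVec_smul]
    simp only [dotProduct_sub, dotProduct_smul, smul_eq_mul]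
    rw [hξ', ← hre_def, hc_def]
    field_simp
    ring
  have hpa : p a.castSucc = p (Fin.last n) := by
    have h : d₀ ⬝ᵥ p = p a.castSucc - p (Fin.last n) := by
      rw [hd₀, sub_dotProduct, single_dotProduct, single_dotProduct]
      ring
    rw [hd₀p] at h
    linarith
  -- the contracted potential
  set p' : Fin n → ℝ := fun i => p i.castSucc with hp'_def
  have hCtp : Cᵀ.mulVec p' = p := by
    funext j
    show ∑ i, Cᵀ j i * p' i = p j
    by_cases hj : j = Fin.last n
    · subst hj
      have hterm : ∀ i : Fin n, Cᵀ (Fin.last n) i * p' i = if i = a then p' i else 0 := by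
        intro i
        rw [Matrix.transpose_apply, hC]
        simp [ite_mul, one_mul, zero_mul]
      simp only [hterm]
      rw [Finset.sum_ite_eq' Finset.univ a p']
      simp [hp'_def, hpa]
    · have hterm : ∀ i : Fin n, Cᵀ j i * p' i = if i = j.castPred hj then p' i else 0 := by
        intro i
        rw [Matrix.transpose_apply, hC]
        rw [if_neg hj]
        by_cases hij : i = j.castPred hj
        · subst hij
          simp [Fin.castSucc_castPred]
        · have hne2 : j ≠ i.castSucc := by
            intro h
            apply hij
            subst h
            simp
          simp [hne2, hij]
      simp only [hterm]
      rw [Finset.sum_ite_eq' Finset.univ (j.castPred hj) p']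
      simp [hp'_def, Fin.castSucc_castPred]
  -- C kills d₀
  have hCd₀ : C.mulVec d₀ = 0 := by
    funext i
    rw [hd₀, Matrix.mulVec_sub]
    simp only [Pi.sub_apply, Matrix.mulVec_single_one, Matrix.col_apply, mul_one, Pi.zero_apply]
    rw [hC i a.castSucc, hC i (Fin.last n)]
    rw [if_neg hne, if_pos rfl]
    by_cases hia : i = a
    · subst hia
      simp
    · rw [if_neg (fun h => hia (Fin.castSucc_inj.mp h).symm), if_neg hia]
      ring
  -- Q' = C Q Cᵀ
  have hBe : ∀ i, B i e = d₀ i := fun i => congrFun he i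
  have hentry : ∀ i k, Q i k = ∑ j, B i j * (d j)⁻¹ * B k j := by
    intro i k
    rw [hQdef, diag_inv_eq d hd', Matrix.mul_apply]
    exact Finset.sum_congr rfl fun j _ => by
      rw [Matrix.mul_diagonal, Matrix.transpose_apply]
  have hdh' : ∀ j, dh j ≠ 0 := fun j => hd' _
  have hentry' : ∀ i k, (Bh * (Matrix.diagonal dh)⁻¹ * Bhᵀ) i k
      = ∑ j : Fin m, B i (e.succAbove j) * (d (e.succAbove j))⁻¹ * B k (e.succAbove j) := by
    intro i k
    rw [diag_inv_eq dh hdh', Matrix.mul_apply]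
    exact Finset.sum_congr rfl fun j _ => by
      rw [Matrix.mul_diagonal, Matrix.transpose_apply, hBh]
      simp [Matrix.submatrix_apply, hdh]
  have hsplit : Q = Bh * (Matrix.diagonal dh)⁻¹ * Bhᵀ
      + (d e)⁻¹ • Matrix.of (fun i k => d₀ i * d₀ k) := by
    ext i k
    simp only [Matrix.add_apply, Matrix.smul_apply, Matrix.of_apply, smul_eq_mul]
    rw [hentry i k, hentry' i k,
      Fin.sum_univ_succAbove (fun j => B i j * (d j)⁻¹ * B k j) e, hBe i, hBe k]
    ring
  have hCW : C * Matrix.of (fun i k => d₀ i * d₀ k) = 0 := by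
    ext i k
    simp only [Matrix.mul_apply, Matrix.of_apply, Matrix.zero_apply]
    have h0 := congrFun hCd₀ i
    simp only [Matrix.mulVec, dotProduct, Pi.zero_apply] at h0
    calc ∑ j, C i j * (d₀ j * d₀ k) = (∑ j, C i j * d₀ j) * d₀ k := by
          rw [Finset.sum_mul]
          exact Finset.sum_congr rfl fun j _ => by ring
      _ = 0 := by rw [h0, zero_mul]
  have hQ'CQC : Q' = C * Q * Cᵀ := by
    have hQ'eq : Q' = C * (Bh * (Matrix.diagonal dh)⁻¹ * Bhᵀ) * Cᵀ := by
      rw [hQ'def, hB', Matrix.transpose_mul]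
      simp only [Matrix.mul_assoc]
    have hzero : C * ((d e)⁻¹ • Matrix.of fun i k => d₀ i * d₀ k) * Cᵀ = 0 := by
      rw [Matrix.mul_smul, Matrix.smul_mul, hCW, Matrix.zero_mul, smul_zero]
    rw [hsplit, Matrix.mul_add, Matrix.add_mul, hzero, add_zero, hQ'eq]
  have hQ'sym : Q'ᵀ = Q' := by
    rw [hQ'CQC]
    simp [Matrix.transpose_mul, Matrix.mul_assoc, hQsym]
  have hbil' := gen_inv_bilin Q' L' hQ'sym hL'
  -- Q' p' = C u = C v
  have hQ'p' : Q'.mulVec p' = C.mulVec u := by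
    rw [hQ'CQC, ← Matrix.mulVec_mulVec, ← Matrix.mulVec_mulVec, hCtp, hQp]
  have hCu : C.mulVec u = C.mulVec v := by
    rw [hu_def, Matrix.mulVec_sub, Matrix.mulVec_smul, hCd₀]
    simp
  have hw : Q'.mulVec p' = C.mulVec v := by rw [hQ'p', hCu]
  -- main computation
  have hmain : (C.mulVec v) ⬝ᵥ L'.mulVec (C.mulVec v) = r - ξ ^ 2 / re := by
    calc (C.mulVec v) ⬝ᵥ L'.mulVec (C.mulVec v)
        = (Q'.mulVec p') ⬝ᵥ L'.mulVec (Q'.mulVec p') := by rw [hw]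
      _ = p' ⬝ᵥ Q'.mulVec p' := hbil' p' p'
      _ = p' ⬝ᵥ C.mulVec u := by rw [hQ'p']
      _ = (Cᵀ.mulVec p') ⬝ᵥ u := by
          rw [Matrix.dotProduct_mulVec, ← Matrix.mulVec_transpose]
      _ = p ⬝ᵥ u := by rw [hCtp]
      _ = u ⬝ᵥ L.mulVec u := by rw [hp_def, dotProduct_comm]
      _ = r - ξ ^ 2 / re := hu_expand
  rw [← Matrix.mulVec_sub, ← hv]
  constructor
  · exact hmain
  · rw [hmain]
    have : 0 ≤ ξ ^ 2 / re := div_nonneg (sq_nonneg _) hre_pos.le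
    linarith
end
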